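/- arXiv:2602.00988 — 15 statements merged into one kernel-verified Lean document; each statement's English description precedes it below -/
import Mathlib

section
/- Let a, b, μ be natural numbers with a < μ < b, and let p ∈ V_μ (so that in particular ∑_{n≥0} p_n = 1 and ∑_{n≥0} n·p_n = μ converge). Then the series ∑_{n≥0} n·L[p]_n converges and ∑_{n≥0} n·L[p]_n = 0 (conservation of the mean value). -/
open scoped BigOperators

/-- `lamr b p = ∑_{ℓ=0}^{b-1} p_ℓ`, the proportion of receivers. -/
noncomputable def lamr (b : ℕ) (p : ℕ → ℝ) : ℝ := ∑ ℓ ∈ Finset.range b, p ℓ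

/-- `lamg a p = ∑_{ℓ≥a+1} p_ℓ`, the proportion of givers. -/
noncomputable def lamg (a : ℕ) (p : ℕ → ℝ) : ℝ := ∑' ℓ : ℕ, if a + 1 ≤ ℓ then p ℓ else 0

/-- The mean-field operator `L[p]_n`. -/
noncomputable def Lop (a b : ℕ) (p : ℕ → ℝ) (n : ℕ) : ℝ :=
  lamr b p * ((if a ≤ n then p (n + 1) else 0) - (if a + 1 ≤ n then p n else 0))
    + lamg a p * ((if 1 ≤ n ∧ n ≤ b then p (n - 1) else 0) - (if n ≤ b - 1 then p n else 0))

/-- `V_μ`: probability mass functions on ℕ with mean `μ`. -/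
def memV (μ : ℕ) (p : ℕ → ℝ) : Prop :=
  (∀ n, 0 ≤ p n) ∧ HasSum p 1 ∧ HasSum (fun n : ℕ => (n : ℝ) * p n) (μ : ℝ)

theorem mean_conservation (a b μ : ℕ) (hau : a < μ) (hub : μ < b) (p : ℕ → ℝ)
    (hp : memV μ p) :
    HasSum (fun n : ℕ => (n : ℝ) * Lop a b p n) 0 := by
  obtain ⟨hpos, hsum1, hmean⟩ := hp
  have hsp : Summable p := hsum1.summable
  have hsnp : Summable (fun n : ℕ => (n : ℝ) * p n) := hmean.summable
  set q : ℕ → ℝ := fun n => if a + 1 ≤ n then p n else 0 with hq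
  set h : ℕ → ℝ := fun n => if a + 1 ≤ n then (n : ℝ) * p n else 0 with hh
  have hqs : Summable q := by
    refine Summable.of_nonneg_of_le (fun n => ?_) (fun n => ?_) hsp
    · simp only [hq]; split_ifs with hc
      · exact hpos n
      · exact le_refl 0
    · simp only [hq]; split_ifs with hc
      · exact le_refl _
      · exact hpos n
  have hhs : Summable h := by
    refine Summable.of_nonneg_of_le (fun n => ?_) (fun n => ?_) hsnp
    · simp only [hh]; split_ifs with hc
      · exact mul_nonneg (Nat.cast_nonneg n) (hpos n)
      · exact le_refl 0
    · simp only [hh]; split_ifs with hc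
      · exact le_refl _
      · exact mul_nonneg (Nat.cast_nonneg n) (hpos n)
  have hqHas : HasSum q (lamg a p) := hqs.hasSum
  have h0 : h 0 = 0 := by simp [hh]
  have q0 : q 0 = 0 := by simp [hq]
  have h1 : HasSum (fun n => h (n + 1)) (∑' n, h n) := by
    rw [hasSum_nat_add_iff 1]
    simpa [h0] using hhs.hasSum
  have hT : HasSum (fun n => h (n + 1) - h n) 0 := by
    simpa using h1.sub hhs.hasSum
  have hq1 : HasSum (fun n => q (n + 1)) (lamg a p) := by
    rw [hasSum_nat_add_iff 1]
    simpa [q0] using hqHas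
  have key : ∀ n : ℕ,
      (if a ≤ n then (n : ℝ) * p (n + 1) else 0) - (if a + 1 ≤ n then (n : ℝ) * p n else 0)
        = (h (n + 1) - h n) - q (n + 1) := by
    intro n
    simp only [hh, hq]
    split_ifs <;> first | (exfalso; omega) | (push_cast; ring)
  have D1 : HasSum (fun n : ℕ =>
      (if a ≤ n then (n : ℝ) * p (n + 1) else 0) - (if a + 1 ≤ n then (n : ℝ) * p n else 0))
      (-lamg a p) := by
    have H := hT.sub hq1
    rw [zero_sub] at H
    convert H using 1
    · rfl
    funext n; exact key n
  -- second part: finite support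
  have hb1 : 1 ≤ b := by omega
  set F : ℕ → ℝ := fun n =>
    (if 1 ≤ n ∧ n ≤ b then (n : ℝ) * p (n - 1) else 0) -
      (if n ≤ b - 1 then (n : ℝ) * p n else 0) with hF
  have hfin : ∀ n ∉ Finset.range (b + 1), F n = 0 := by
    intro n hn
    simp only [Finset.mem_range, not_lt] at hn
    simp only [hF]
    rw [if_neg (by omega), if_neg (by omega)]
    ring
  have D2 : HasSum F (lamr b p) := by
    have H := hasSum_sum_of_ne_finset_zero (L := SummationFilter.unconditional ℕ) hfin
    have hsum : ∑ n ∈ Finset.range (b + 1), F n = lamr b p := by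
      simp only [hF]
      rw [Finset.sum_sub_distrib, Finset.sum_range_succ' _ b, Finset.sum_range_succ _ b]
      have e1 : ∀ i ∈ Finset.range b,
          (if 1 ≤ i + 1 ∧ i + 1 ≤ b then ((i + 1 : ℕ) : ℝ) * p (i + 1 - 1) else 0)
            = ((i : ℝ) + 1) * p i := by
        intro i hi
        rw [Finset.mem_range] at hi
        rw [if_pos ⟨by omega, by omega⟩]
        push_cast; simp
      have e2 : ∀ i ∈ Finset.range b,
          (if i ≤ b - 1 then (i : ℝ) * p i else 0) = (i : ℝ) * p i := by
        intro i hi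
        rw [Finset.mem_range] at hi
        rw [if_pos (by omega)]
      rw [Finset.sum_congr rfl e1, Finset.sum_congr rfl e2]
      rw [if_neg (by omega : ¬ (1 ≤ 0 ∧ 0 ≤ b)), if_neg (by omega : ¬ b ≤ b - 1)]
      rw [lamr]
      rw [add_zero, add_zero, ← Finset.sum_sub_distrib]
      exact Finset.sum_congr rfl (fun i _ => by ring)
    rwa [hsum] at H
  have final := (D1.mul_left (lamr b p)).add (D2.mul_left (lamg a p))
  convert final using 1
  · rfl
  · funext n
    simp only [Lop, hF]
    split_ifs <;> ring
  · ring
end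

section
/- Let a, μ, b be natural numbers with 0 ≤ a < μ < b and suppose 2μ < a + b. Then there exists a unique x in the open interval (0,1) such that f(x) = 0. -/
open scoped BigOperators

open Finset Set Filter

/-- The polynomial `f(x) = (b−μ)x^{b+2−a} + (μ−b−1)x^{b+1−a} + (μ−a+1)x + (a−μ)`. -/
noncomputable def fpoly (a μ b : ℕ) (x : ℝ) : ℝ :=
  ((b : ℝ) - μ) * x ^ (b + 2 - a) + ((μ : ℝ) - b - 1) * x ^ (b + 1 - a)
    + ((μ : ℝ) - a + 1) * x + ((a : ℝ) - μ)

theorem unique_root_in_unit_interval (a μ b : ℕ) (hau : a < μ) (hub : μ < b)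
    (hmean : 2 * μ < a + b) :
    ∃! x : ℝ, x ∈ Set.Ioo (0 : ℝ) 1 ∧ fpoly a μ b x = 0 := by
  have hab2 : a + 2 ≤ b := by omega
  set n : ℕ := b + 1 - a with hn
  have hn2 : 2 ≤ n := by omega
  have hnr : (n : ℝ) = (b : ℝ) + 1 - a := by
    rw [hn, Nat.cast_sub (by omega : a ≤ b + 1)]; push_cast; ring
  have har : (a : ℝ) < μ := by exact_mod_cast hau
  have hbr : (μ : ℝ) < b := by exact_mod_cast hub
  have hmr : 2 * (μ : ℝ) < a + b := by exact_mod_cast hmean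
  set g : ℝ → ℝ :=
    fun x => ((b : ℝ) - μ) * x ^ n + ((μ : ℝ) - a) - ∑ k ∈ Finset.Ico 1 n, x ^ k with hgdef
  -- geometric sum identity
  have hgeo : ∀ x : ℝ, (x - 1) * ∑ k ∈ Finset.Ico 1 n, x ^ k = x ^ n - x := by
    intro x
    have h2 := geom_sum_mul x n
    rw [Finset.range_eq_Ico, Finset.sum_eq_sum_Ico_succ_bot (by omega : 0 < n)] at h2
    simp only [pow_zero] at h2
    linear_combination h2
  -- factorization
  have hfac : ∀ x : ℝ, fpoly a μ b x = (x - 1) * g x := by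
    intro x
    have e1 : b + 2 - a = n + 1 := by omega
    have e2 : b + 1 - a = n := by omega
    simp only [fpoly, e1, e2, hgdef]
    linear_combination hgeo x
  -- derivative
  set g' : ℝ → ℝ :=
    fun x => ((b : ℝ) - μ) * ((n : ℝ) * x ^ (n - 1))
      - ∑ k ∈ Finset.Ico 1 n, (k : ℝ) * x ^ (k - 1) with hg'def
  have hderiv : ∀ x : ℝ, HasDerivAt g (g' x) x := by
    intro x
    have h1 : HasDerivAt (fun x : ℝ => ((b : ℝ) - μ) * x ^ n + ((μ : ℝ) - a))
        (((b : ℝ) - μ) * ((n : ℝ) * x ^ (n - 1))) x :=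
      ((hasDerivAt_pow n x).const_mul (((b : ℝ) - μ))).add_const _
    have h2 : HasDerivAt (fun x : ℝ => ∑ k ∈ Finset.Ico 1 n, x ^ k)
        (∑ k ∈ Finset.Ico 1 n, (k : ℝ) * x ^ (k - 1)) x :=
      HasDerivAt.fun_sum fun k _ => hasDerivAt_pow k x
    exact h1.sub h2
  have gcont : Continuous g := by
    apply Continuous.sub
    · exact (continuous_const.mul (continuous_pow n)).add continuous_const
    · exact continuous_finset_sum _ fun k _ => continuous_pow k
  -- the normalized derivative r
  set r : ℝ → ℝ :=
    fun x => ((b : ℝ) - μ) * (n : ℝ) - ∑ k ∈ Finset.Ico 1 n, (k : ℝ) / x ^ (n - k) with hrdef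
  have hrel : ∀ x : ℝ, 0 < x → g' x = r x * x ^ (n - 1) := by
    intro x hx
    simp only [hg'def, hrdef, sub_mul, Finset.sum_mul]
    congr 1
    · ring
    · apply Finset.sum_congr rfl
      intro k hk
      simp only [Finset.mem_Ico] at hk
      have hsplit : x ^ (n - 1) = x ^ (n - k) * x ^ (k - 1) := by
        rw [← pow_add]; congr 1; omega
      rw [hsplit, ← mul_assoc, div_mul_cancel₀ _ (pow_ne_zero _ hx.ne')]
  have hrmono : ∀ x y : ℝ, 0 < x → x < y → r x < r y := by
    intro x y hx hxy
    have hsum : ∑ k ∈ Finset.Ico 1 n, (k : ℝ) / y ^ (n - k)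
        < ∑ k ∈ Finset.Ico 1 n, (k : ℝ) / x ^ (n - k) := by
      apply Finset.sum_lt_sum_of_nonempty
      · exact ⟨1, by simp [Finset.mem_Ico]; omega⟩
      · intro k hk
        simp only [Finset.mem_Ico] at hk
        have hkpos : (0 : ℝ) < k := by exact_mod_cast hk.1
        have hxp : (0 : ℝ) < x ^ (n - k) := pow_pos hx _
        have hlt : x ^ (n - k) < y ^ (n - k) :=
          pow_lt_pow_left₀ hxy hx.le (by omega)
        exact div_lt_div_of_pos_left hkpos hxp hlt
    simp only [hrdef]
    linarith
  -- derivative at 1 is positive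
  have hsumnat : (∑ k ∈ Finset.Ico 1 n, k) * 2 = n * (n - 1) := by
    have h := Finset.sum_range_id_mul_two n
    rw [Finset.range_eq_Ico, Finset.sum_eq_sum_Ico_succ_bot (by omega : 0 < n)] at h
    simpa using h
  have hsumr : (∑ k ∈ Finset.Ico 1 n, (k : ℝ)) * 2 = (n : ℝ) * ((n : ℝ) - 1) := by
    have := congrArg (fun m : ℕ => (m : ℝ)) hsumnat
    push_cast [Nat.cast_sub (by omega : 1 ≤ n)] at this
    linarith
  have hg'1 : 0 < g' 1 := by
    simp only [hg'def, one_pow, mul_one]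
    have hnpos : (0 : ℝ) < n := by positivity
    nlinarith [mul_pos hnpos (by linarith : (0 : ℝ) < (a : ℝ) + b - 2 * μ)]
  -- values at 0 and 1
  have hg1 : g 1 = 0 := by
    simp only [hgdef, one_pow, Finset.sum_const, nsmul_eq_mul, mul_one, Nat.card_Ico]
    rw [Nat.cast_sub (by omega : 1 ≤ n)]
    push_cast
    linarith
  have hg0 : 0 < g 0 := by
    have hs : ∑ k ∈ Finset.Ico 1 n, (0 : ℝ) ^ k = 0 := by
      apply Finset.sum_eq_zero
      intro k hk
      simp only [Finset.mem_Ico] at hk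
      exact zero_pow (by omega)
    simp only [hgdef, hs, zero_pow (by omega : n ≠ 0), mul_zero, zero_add, sub_zero]
    linarith
  -- find p ∈ (0,1) with g p < 0
  obtain ⟨p, hps, hpmem⟩ : ∃ p : ℝ, 0 < slope g 1 p ∧ p ∈ Set.Ioo (0 : ℝ) 1 := by
    have hslope := hasDerivAt_iff_tendsto_slope.mp (hderiv 1)
    have hev : ∀ᶠ z in nhdsWithin (1 : ℝ) {(1 : ℝ)}ᶜ, 0 < slope g 1 z :=
      hslope.eventually (eventually_gt_nhds hg'1)
    have hle : nhdsWithin (1 : ℝ) (Set.Iio 1) ≤ nhdsWithin (1 : ℝ) {(1 : ℝ)}ᶜ :=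
      nhdsWithin_mono _ fun z hz => ne_of_lt hz
    have hmem : Set.Ioo (0 : ℝ) 1 ∈ nhdsWithin (1 : ℝ) (Set.Iio 1) :=
      Ioo_mem_nhdsLT_of_mem (by constructor <;> norm_num)
    exact ((hev.filter_mono hle).and hmem).exists
  have hgp : g p < 0 := by
    rw [slope_def_field, hg1, sub_zero] at hps
    rcases div_pos_iff.mp hps with ⟨h1, h2⟩ | ⟨h1, h2⟩
    · linarith [hpmem.2]
    · linarith
  -- existence of root
  obtain ⟨x, hxmem, hgx⟩ : ∃ x ∈ Set.Ioo (0 : ℝ) p, g x = 0 := by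
    have h := intermediate_value_Ioo' (le_of_lt hpmem.1) gcont.continuousOn
      (Set.mem_Ioo.mpr ⟨hgp, hg0⟩)
    obtain ⟨x, hx1, hx2⟩ := h
    exact ⟨x, hx1, hx2⟩
  have hx01 : x ∈ Set.Ioo (0 : ℝ) 1 := ⟨hxmem.1, hxmem.2.trans hpmem.2⟩
  -- uniqueness key
  have key : ∀ u v : ℝ, u ∈ Set.Ioo (0 : ℝ) 1 → v ∈ Set.Ioo (0 : ℝ) 1 →
      g u = 0 → g v = 0 → u < v → False := by
    intro u v hu hv hgu hgv huv
    obtain ⟨c1, hc1, hdc1⟩ :=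
      exists_deriv_eq_zero huv gcont.continuousOn (hgu.trans hgv.symm)
    obtain ⟨c2, hc2, hdc2⟩ :=
      exists_deriv_eq_zero hv.2 gcont.continuousOn (hgv.trans hg1.symm)
    have hc1pos : 0 < c1 := lt_trans hu.1 hc1.1
    have hc2pos : 0 < c2 := lt_trans (lt_trans hu.1 hc1.1) (hc1.2.trans hc2.1)
    have e1 : g' c1 = 0 := by rw [← (hderiv c1).deriv]; exact hdc1
    have e2 : g' c2 = 0 := by rw [← (hderiv c2).deriv]; exact hdc2
    have r1 : r c1 = 0 := by
      have h := (hrel c1 hc1pos).symm.trans e1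
      exact (mul_eq_zero.mp h).resolve_right (pow_ne_zero _ hc1pos.ne')
    have r2 : r c2 = 0 := by
      have h := (hrel c2 hc2pos).symm.trans e2
      exact (mul_eq_zero.mp h).resolve_right (pow_ne_zero _ hc2pos.ne')
    have := hrmono c1 c2 hc1pos (hc1.2.trans hc2.1)
    rw [r1, r2] at this
    exact lt_irrefl 0 this
  -- assemble
  refine ⟨x, ⟨hx01, by rw [hfac, hgx, mul_zero]⟩, ?_⟩
  rintro y ⟨hy, hfy⟩
  have hgy : g y = 0 := by
    have h := (hfac y).symm.trans hfy
    exact (mul_eq_zero.mp h).resolve_left (sub_ne_zero.mpr (ne_of_lt hy.2))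
  rcases lt_trichotomy y x with h | h | h
  · exact absurd (key y x hy hx01 hgy hgx h) (fun h => h)
  · exact h
  · exact absurd (key x y hx01 hy hgx hgy h) (fun h => h)
end

section
/- Let a, μ, b be natural numbers with 0 ≤ a < μ < b and suppose 2μ = a + b. Then for every real x > 0, f(x) = 0 if and only if x = 1; that is, x = 1 is the unique positive root of f. -/
open scoped BigOperators

lemma pair_lt (m i : ℕ) (him : i < m) (x : ℝ) (hx : 0 < x) (hx1 : x ≠ 1) :
    x ^ (i + 1) + x ^ (2 * m - i) < 1 + x ^ (2 * m + 1) := by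
  have hexp : (i + 1) + (2 * m - i) = 2 * m + 1 := by omega
  have hprod : x ^ (i + 1) * x ^ (2 * m - i) = x ^ (2 * m + 1) := by
    rw [← pow_add, hexp]
  rcases lt_or_gt_of_ne hx1 with h | h
  · have h1 : x ^ (i + 1) < 1 := pow_lt_one₀ hx.le h (by omega)
    have h2 : x ^ (2 * m - i) < 1 := pow_lt_one₀ hx.le h (by omega)
    nlinarith [mul_pos (sub_pos.2 h1) (sub_pos.2 h2)]
  · have h1 : 1 < x ^ (i + 1) := one_lt_pow₀ h (by omega)
    have h2 : 1 < x ^ (2 * m - i) := one_lt_pow₀ h (by omega)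
    nlinarith [mul_pos (sub_pos.2 h1) (sub_pos.2 h2)]

lemma key (m : ℕ) (hm : 1 ≤ m) (x : ℝ) (hx : 0 < x) (hx1 : x ≠ 1) :
    x * ∑ i ∈ Finset.range (2 * m), x ^ i < m * (1 + x ^ (2 * m + 1)) := by
  have hsum : x * ∑ i ∈ Finset.range (2 * m), x ^ i
      = ∑ i ∈ Finset.range m, (x ^ (i + 1) + x ^ (2 * m - i)) := by
    rw [Finset.mul_sum]
    have h2 : (2 * m) = m + m := by ring
    rw [h2, Finset.sum_range_add, Finset.sum_add_distrib]
    congr 1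
    · exact Finset.sum_congr rfl (fun i _ => by rw [← pow_succ'])
    · rw [← Finset.sum_range_reflect (fun i => x * x ^ (m + i))]
      refine Finset.sum_congr rfl (fun i hi => ?_)
      simp only [Finset.mem_range] at hi
      rw [← pow_succ']
      congr 1
      omega
  rw [hsum]
  calc ∑ i ∈ Finset.range m, (x ^ (i + 1) + x ^ (2 * m - i))
      < ∑ i ∈ Finset.range m, (1 + x ^ (2 * m + 1)) := by
        apply Finset.sum_lt_sum_of_nonempty (by simp; omega)
        intro i hi
        exact pair_lt m i (Finset.mem_range.1 hi) x hx hx1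
    _ = m * (1 + x ^ (2 * m + 1)) := by
        rw [Finset.sum_const, Finset.card_range, nsmul_eq_mul]

theorem unique_root_at_one (a μ b : ℕ) (hau : a < μ) (hub : μ < b)
    (hmean : 2 * μ = a + b) :
    ∀ x : ℝ, 0 < x → (fpoly a μ b x = 0 ↔ x = 1) := by
  obtain ⟨m, hμ, hb⟩ : ∃ m, μ = a + m ∧ b = a + 2 * m := ⟨μ - a, by omega, by omega⟩
  subst hμ hb
  have hm1 : 1 ≤ m := by omega
  intro x hx
  have hf : fpoly a (a + m) (a + 2 * m) x
      = (x - 1) * ((m : ℝ) * (1 + x ^ (2 * m + 1)) - x * ∑ i ∈ Finset.range (2 * m), x ^ i) := by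
    have hgs : (x - 1) * ∑ i ∈ Finset.range (2 * m), x ^ i = x ^ (2 * m) - 1 := by
      rw [mul_comm]; exact geom_sum_mul x (2 * m)
    unfold fpoly
    rw [show a + 2 * m + 2 - a = 2 * m + 2 from by omega,
        show a + 2 * m + 1 - a = 2 * m + 1 from by omega]
    push_cast
    linear_combination x * hgs
  constructor
  · intro h0
    by_contra hx1
    have hG := key m hm1 x hx hx1
    rw [hf] at h0
    rcases mul_eq_zero.1 h0 with h | h
    · exact hx1 (by linarith)
    · linarith
  · intro h; subst h
    rw [hf]; ring
end

section
/- Let a, μ, b be natural numbers with 0 ≤ a < μ < b and suppose 2μ > a + b. Then there exists a unique x in the open interval (1,∞) such that f(x) = 0. -/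
open scoped BigOperators

open Finset

/-- The factored cofactor `H(x) = ∑_{j=0}^{d} (j - c) x^j`, so that
`f(x) = (x-1)^2 · H(x)` with `d = b - a`, `c = μ - a`. -/
noncomputable def Hsum (c d : ℕ) (x : ℝ) : ℝ := ∑ j ∈ range (d + 1), ((j : ℝ) - c) * x ^ j

lemma factor_aux (d : ℕ) (C x : ℝ) :
    (x - 1) ^ 2 * ∑ j ∈ range (d + 1), ((j : ℝ) - C) * x ^ j
      = ((d : ℝ) - C) * x ^ (d + 2) + (C - d - 1) * x ^ (d + 1) + (C + 1) * x - C := by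
  induction d with
  | zero => simp; ring
  | succ n ih =>
      rw [Finset.sum_range_succ, mul_add, ih]
      push_cast
      ring

lemma key_lt (c d : ℕ) (hcd : c < d) {x y : ℝ} (hx : 0 < x) (hxy : x < y) :
    Hsum c d x * y ^ c < Hsum c d y * x ^ c := by
  have hy : 0 < y := hx.trans hxy
  rw [Hsum, Hsum, Finset.sum_mul, Finset.sum_mul]
  apply Finset.sum_lt_sum
  · intro i _
    rcases le_or_gt i c with h | h
    · have hcoef : ((i : ℝ) - c) ≤ 0 := by
        have : (i : ℝ) ≤ c := Nat.cast_le.2 h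
        linarith
      have e1 : x ^ c = x ^ i * x ^ (c - i) := by rw [← pow_add]; congr 1; omega
      have e2 : y ^ c = y ^ i * y ^ (c - i) := by rw [← pow_add]; congr 1; omega
      have hpow : y ^ i * x ^ c ≤ x ^ i * y ^ c := by
        rw [e1, e2]
        have h1 : x ^ (c - i) ≤ y ^ (c - i) := pow_le_pow_left₀ hx.le hxy.le _
        have h2 : (0:ℝ) < x ^ i := pow_pos hx i
        have h3 : (0:ℝ) < y ^ i := pow_pos hy i
        nlinarith [mul_le_mul_of_nonneg_left h1 (mul_pos h2 h3).le]
      have := mul_le_mul_of_nonpos_left hpow hcoef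
      linarith [this, mul_assoc ((i:ℝ) - c) (x ^ i) (y ^ c), mul_assoc ((i:ℝ) - c) (y ^ i) (x ^ c)]
    · have hcoef : (0:ℝ) ≤ ((i : ℝ) - c) := by
        have : (c : ℝ) < i := Nat.cast_lt.2 h
        linarith
      have e1 : x ^ i = x ^ c * x ^ (i - c) := by rw [← pow_add]; congr 1; omega
      have e2 : y ^ i = y ^ c * y ^ (i - c) := by rw [← pow_add]; congr 1; omega
      have hpow : x ^ i * y ^ c ≤ y ^ i * x ^ c := by
        rw [e1, e2]
        have h1 : x ^ (i - c) ≤ y ^ (i - c) := pow_le_pow_left₀ hx.le hxy.le _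
        have h2 : (0:ℝ) < x ^ c := pow_pos hx c
        have h3 : (0:ℝ) < y ^ c := pow_pos hy c
        nlinarith [mul_le_mul_of_nonneg_left h1 (mul_pos h2 h3).le]
      have := mul_le_mul_of_nonneg_left hpow hcoef
      linarith [this, mul_assoc ((i:ℝ) - c) (x ^ i) (y ^ c), mul_assoc ((i:ℝ) - c) (y ^ i) (x ^ c)]
  · refine ⟨d, Finset.self_mem_range_succ d, ?_⟩
    have hcoef : (0:ℝ) < ((d : ℝ) - c) := by
      have : (c : ℝ) < d := Nat.cast_lt.2 hcd
      linarith
    have e1 : x ^ d = x ^ c * x ^ (d - c) := by rw [← pow_add]; congr 1; omega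
    have e2 : y ^ d = y ^ c * y ^ (d - c) := by rw [← pow_add]; congr 1; omega
    have hpow : x ^ d * y ^ c < y ^ d * x ^ c := by
      rw [e1, e2]
      have h1 : x ^ (d - c) < y ^ (d - c) := by
        apply pow_lt_pow_left₀ hxy hx.le
        omega
      have h2 : (0:ℝ) < x ^ c := pow_pos hx c
      have h3 : (0:ℝ) < y ^ c := pow_pos hy c
      nlinarith [mul_lt_mul_of_pos_left h1 (mul_pos h2 h3)]
    have := mul_lt_mul_of_pos_left hpow hcoef
    linarith [this, mul_assoc ((d:ℝ) - c) (x ^ d) (y ^ c), mul_assoc ((d:ℝ) - c) (y ^ d) (x ^ c)]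

lemma Hsum_one_neg (c d : ℕ) (h : d < 2 * c) : Hsum c d 1 < 0 := by
  have hgauss : (∑ j ∈ range (d + 1), (j : ℝ)) = d * (d + 1) / 2 := by
    have := Finset.sum_range_id_mul_two (d + 1)
    have : ((∑ i ∈ range (d + 1), i : ℕ) : ℝ) * 2 = (d + 1) * d := by
      exact_mod_cast congrArg (Nat.cast : ℕ → ℝ) this
    push_cast at this
    linarith
  have : Hsum c d 1 = (∑ j ∈ range (d + 1), (j : ℝ)) - (d + 1) * c := by
    simp [Hsum, Finset.sum_sub_distrib, Finset.mul_sum]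
  rw [this, hgauss]
  have hc : (d : ℝ) < 2 * c := by exact_mod_cast h
  have hd0 : (0:ℝ) ≤ d := Nat.cast_nonneg d
  nlinarith

lemma Hsum_big_pos (c d : ℕ) (hcd : c < d) : Hsum c d ((d:ℝ)^2 + 1) > 0 := by
  set M : ℝ := (d:ℝ)^2 + 1 with hM
  have hd0 : (0:ℝ) ≤ d := Nat.cast_nonneg d
  have hM1 : (1:ℝ) ≤ M := by nlinarith
  have hM0 : (0:ℝ) < M := by linarith
  have hd1 : 1 ≤ d := Nat.one_le_iff_ne_zero.2 (by omega)
  rw [Hsum, Finset.sum_range_succ]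
  have hbound : ∀ j ∈ range d, -((c:ℝ) * M ^ (d-1)) ≤ ((j : ℝ) - c) * M ^ j := by
    intro j hj
    have hj' : j ≤ d - 1 := by simp at hj; omega
    have hMj : M ^ j ≤ M ^ (d-1) := pow_le_pow_right₀ hM1 hj'
    have hMjpos : (0:ℝ) < M ^ j := pow_pos hM0 j
    have hMd1pos : (0:ℝ) < M ^ (d-1) := pow_pos hM0 _
    have hc0 : (0:ℝ) ≤ c := Nat.cast_nonneg c
    rcases le_or_gt (c:ℝ) (j:ℝ) with h | h
    · nlinarith
    · nlinarith
  have hsum : -((d:ℝ) * ((c:ℝ) * M ^ (d-1))) ≤ ∑ j ∈ range d, ((j : ℝ) - c) * M ^ j := by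
    have := Finset.sum_le_sum hbound
    simpa using this
  have htop : M ^ d ≤ ((d:ℝ) - c) * M ^ d := by
    have h1 : (1:ℝ) ≤ (d:ℝ) - c := by
      have : (c:ℝ) + 1 ≤ d := by exact_mod_cast hcd
      linarith
    nlinarith [pow_pos hM0 d]
  have hMd : M ^ d = M * M ^ (d-1) := by
    rw [← pow_succ']
    congr 1
    omega
  have hcle : (c:ℝ) ≤ (d:ℝ) := by exact_mod_cast hcd.le
  have hMd1pos : (0:ℝ) < M ^ (d-1) := pow_pos hM0 _
  have hkey : (d:ℝ) * ((c:ℝ) * M ^ (d-1)) < M ^ d := by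
    rw [hMd]
    have : (d:ℝ) * c ≤ (d:ℝ)^2 := by nlinarith
    nlinarith
  linarith

theorem unique_root_above_one (a μ b : ℕ) (hau : a < μ) (hub : μ < b)
    (hmean : 2 * μ > a + b) :
    ∃! x : ℝ, x ∈ Set.Ioi (1 : ℝ) ∧ fpoly a μ b x = 0 := by
  set c : ℕ := μ - a with hcdef
  set d : ℕ := b - a with hddef
  have hcd : c < d := by omega
  have h2c : d < 2 * c := by omega
  have hc : (c : ℝ) = (μ : ℝ) - a := by
    rw [hcdef]; push_cast [Nat.cast_sub hau.le]; ring
  have hd : (d : ℝ) = (b : ℝ) - a := by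
    rw [hddef]; push_cast [Nat.cast_sub (hau.trans hub).le]; ring
  have hfeq : ∀ x : ℝ, fpoly a μ b x = (x - 1) ^ 2 * Hsum c d x := by
    intro x
    have h1 : b + 2 - a = d + 2 := by omega
    have h2 : b + 1 - a = d + 1 := by omega
    simp only [fpoly, Hsum]
    rw [factor_aux d (c : ℝ) x, h1, h2, hc, hd]
    ring
  have hcont : Continuous (Hsum c d) := by
    unfold Hsum
    exact continuous_finset_sum _ fun i _ => continuous_const.mul (continuous_pow i)
  have hM1 : (1:ℝ) ≤ (d:ℝ)^2 + 1 := by nlinarith [sq_nonneg ((d:ℝ))]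
  have h0mem : (0:ℝ) ∈ Set.Ioo (Hsum c d 1) (Hsum c d ((d:ℝ)^2 + 1)) :=
    ⟨Hsum_one_neg c d h2c, Hsum_big_pos c d hcd⟩
  obtain ⟨x, hx, hx0⟩ := intermediate_value_Ioo hM1 hcont.continuousOn h0mem
  have hx1 : (1:ℝ) < x := hx.1
  have huniq : ∀ y z : ℝ, 1 < y → 1 < z → Hsum c d y = 0 → Hsum c d z = 0 → y = z := by
    intro y z hy hz hy0 hz0
    rcases lt_trichotomy y z with h | h | h
    · have := key_lt c d hcd (by linarith : (0:ℝ) < y) h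
      rw [hy0, hz0] at this
      simp at this
    · exact h
    · have := key_lt c d hcd (by linarith : (0:ℝ) < z) h
      rw [hy0, hz0] at this
      simp at this
  refine ⟨x, ⟨hx1, ?_⟩, ?_⟩
  · rw [hfeq, hx0, mul_zero]
  · rintro y ⟨hy1, hfy⟩
    have hy1' : (1:ℝ) < y := hy1
    have hy0 : Hsum c d y = 0 := by
      rw [hfeq y] at hfy
      have : (y - 1) ^ 2 ≠ 0 := pow_ne_zero 2 (sub_ne_zero.2 (ne_of_gt hy1'))
      exact (mul_eq_zero.1 hfy).resolve_left this
    exact huniq y x hy1' hx1 hy0 hx0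
end

section
/- Let a, μ, b be natural numbers with 0 ≤ a < μ < b, and define g : ℝ → ℝ by g(x) = x^{μ−a} · ∑_{ℓ=1}^{b−μ} ℓ·x^ℓ − ∑_{ℓ=1}^{μ−a} (1 + x + ⋯ + x^{ℓ−1}). Then for every real x, f(x) = (x−1)²·g(x). In particular, x = 1 is always a root of f of multiplicity at least 2. -/
open scoped BigOperators

private lemma L1 (x : ℝ) : ∀ n : ℕ,
    (x - 1) ^ 2 * ∑ ℓ ∈ Finset.Icc 1 n, (ℓ : ℝ) * x ^ ℓ
      = n * x ^ (n + 2) - (n + 1) * x ^ (n + 1) + x := by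
  intro n
  induction n with
  | zero => simp
  | succ n ih =>
    rw [Finset.sum_Icc_succ_top (Nat.le_add_left 1 n), mul_add, ih]
    push_cast
    ring

private lemma L2 (x : ℝ) : ∀ m : ℕ,
    (x - 1) ^ 2 * ∑ ℓ ∈ Finset.Icc 1 m, ∑ j ∈ Finset.range ℓ, x ^ j
      = x * (x ^ m - 1) - m * (x - 1) := by
  intro m
  induction m with
  | zero => simp
  | succ m ih =>
    rw [Finset.sum_Icc_succ_top (Nat.le_add_left 1 m), mul_add, ih]
    have h := geom_sum_mul x (m + 1)
    have : (x - 1) ^ 2 * ∑ j ∈ Finset.range (m + 1), x ^ j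
        = (x - 1) * (x ^ (m + 1) - 1) := by
      rw [← h]; ring
    rw [this]
    push_cast
    ring

theorem fpoly_factorization (a μ b : ℕ) (hau : a < μ) (hub : μ < b) :
    ∀ x : ℝ,
      fpoly a μ b x =
        (x - 1) ^ 2 *
          (x ^ (μ - a) * ∑ ℓ ∈ Finset.Icc 1 (b - μ), (ℓ : ℝ) * x ^ ℓ
            - ∑ ℓ ∈ Finset.Icc 1 (μ - a), ∑ j ∈ Finset.range ℓ, x ^ j) := by
  intro x
  set n := b - μ with hn
  set m := μ - a with hm
  have e1 : b + 2 - a = m + n + 2 := by omega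
  have e2 : b + 1 - a = m + n + 1 := by omega
  have c1 : (b : ℝ) - μ = n := by rw [hn]; push_cast [Nat.cast_sub hub.le]; ring
  have c2 : (μ : ℝ) - a = m := by rw [hm]; push_cast [Nat.cast_sub hau.le]; ring
  have c3 : (μ : ℝ) - b - 1 = -(↑n + 1) := by rw [← c1]; ring
  rw [mul_sub, L2, ← mul_assoc, mul_comm ((x-1)^2) (x ^ m), mul_assoc, L1]
  unfold fpoly
  rw [e1, e2, c1, c3]
  have c2' : (μ : ℝ) - ↑a + 1 = ↑m + 1 := by rw [← c2]
  have c4 : (a : ℝ) - μ = -(m : ℝ) := by rw [← c2]; ring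
  rw [c2', c4]
  rw [pow_add, pow_add]
  ring
end

section
/- Let a, μ, b be natural numbers with 0 ≤ a < μ < b, and let r̄ > 0 be a real number with r̄ ≠ 1 and f(r̄) = 0. Define the sequence p* by p*_n = 0 for n < a, p*_n = r̄^{n−a}·(1−r̄)/(1−r̄^{b+1−a}) for a ≤ n ≤ b, and p*_n = 0 for n > b. Then p* ∈ V_μ (i.e., p*_n ≥ 0 for all n, ∑_{n≥0} p*_n = 1, and ∑_{n≥0} n·p*_n = μ), and p* is an equilibrium of the mean-field dynamics: L[p*]_n = 0 for every n ∈ ℕ. -/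
open scoped BigOperators

/-- The truncated geometric-type candidate equilibrium with common ratio `r`. -/
noncomputable def pstar (a b : ℕ) (r : ℝ) (n : ℕ) : ℝ :=
  if n < a then 0
  else if n ≤ b then r ^ (n - a) * (1 - r) / (1 - r ^ (b + 1 - a))
  else 0

lemma geom_mul' (r : ℝ) (k : ℕ) : (1 - r) * ∑ i ∈ Finset.range k, r ^ i = 1 - r ^ k := by
  induction k with
  | zero => simp
  | succ n ih => rw [Finset.sum_range_succ, mul_add, ih]; ring

lemma geomT' (r : ℝ) (k : ℕ) : (1 - r) ^ 2 * ∑ i ∈ Finset.range k, (i : ℝ) * r ^ i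
    = r - (k : ℝ) * r ^ k + ((k : ℝ) - 1) * r ^ (k + 1) := by
  induction k with
  | zero => simp
  | succ n ih => rw [Finset.sum_range_succ, mul_add, ih]; push_cast; ring

lemma pstar_zero_lt {a b : ℕ} (r : ℝ) {n : ℕ} (h : n < a) : pstar a b r n = 0 := by
  rw [pstar, if_pos h]

lemma pstar_zero_gt {a b : ℕ} (r : ℝ) {n : ℕ} (h : b < n) (hab : a ≤ b) :
    pstar a b r n = 0 := by
  rw [pstar, if_neg (by omega), if_neg (by omega)]

lemma pstar_val {a b : ℕ} (r : ℝ) {n : ℕ} (h1 : a ≤ n) (h2 : n ≤ b) :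
    pstar a b r n = r ^ (n - a) * (1 - r) / (1 - r ^ (b + 1 - a)) := by
  rw [pstar, if_neg (by omega), if_pos h2]

lemma pstar_step {a b : ℕ} (r : ℝ) {n : ℕ} (h1 : a ≤ n) (h2 : n < b) :
    pstar a b r (n + 1) = r * pstar a b r n := by
  rw [pstar_val r (by omega) (by omega), pstar_val r h1 (by omega),
    show n + 1 - a = (n - a) + 1 from by omega, pow_succ]
  ring

theorem equilibrium_distribution (a μ b : ℕ) (hau : a < μ) (hub : μ < b)
    (r : ℝ) (hr : 0 < r) (hr1 : r ≠ 1) (hroot : fpoly a μ b r = 0) :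
    memV μ (pstar a b r) ∧ ∀ n : ℕ, Lop a b (pstar a b r) n = 0 := by
  have hab : a < b := lt_trans hau hub
  set k := b + 1 - a with hk
  have hk2 : 3 ≤ k := by omega
  have hr1' : (1 : ℝ) - r ≠ 0 := sub_ne_zero.mpr (Ne.symm hr1)
  have hcase : ((1:ℝ) - r > 0 ∧ 1 - r ^ k > 0) ∨ ((1:ℝ) - r < 0 ∧ 1 - r ^ k < 0) := by
    rcases lt_or_gt_of_ne hr1 with h | h
    · left; exact ⟨by linarith, by have := pow_lt_one₀ hr.le h (show k ≠ 0 by omega); linarith⟩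
    · right; exact ⟨by linarith, by have := one_lt_pow₀ h (show k ≠ 0 by omega); linarith⟩
  have hD : (1 : ℝ) - r ^ k ≠ 0 := by rcases hcase with ⟨_, h⟩ | ⟨_, h⟩ <;> linarith
  have hcpos : 0 < (1 - r) / (1 - r ^ k) := by
    rcases hcase with ⟨h1, h2⟩ | ⟨h1, h2⟩
    · exact div_pos h1 h2
    · exact div_pos_of_neg_of_neg h1 h2
  have hz1 : ∀ m, m < a → pstar a b r m = 0 := fun m h => pstar_zero_lt r h
  have hz2 : ∀ m, b < m → pstar a b r m = 0 := fun m h => pstar_zero_gt r h (by omega)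
  have key : ∀ i ∈ Finset.range k, pstar a b r (a + i) = r ^ i * (1 - r) / (1 - r ^ k) := by
    intro i hi
    simp only [Finset.mem_range] at hi
    rw [pstar_val r (by omega) (by omega), show a + i - a = i from by omega, ← hk]
  -- sum = 1
  have hsum1 : ∑ n ∈ Finset.Icc a b, pstar a b r n = 1 := by
    rw [← Finset.Ico_add_one_right_eq_Icc, Finset.sum_Ico_eq_sum_range, ← hk, Finset.sum_congr rfl key,
      ← Finset.sum_div, ← Finset.sum_mul, div_eq_one_iff_eq hD]
    linear_combination geom_mul' r k
  have hsupp : ∀ n ∉ Finset.Icc a b, pstar a b r n = 0 := by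
    intro n hn
    simp only [Finset.mem_Icc, not_and_or, not_le] at hn
    rcases hn with h | h
    · exact hz1 n h
    · exact hz2 n h
  have hS1 : HasSum (pstar a b r) 1 := hsum1 ▸ hasSum_sum_of_ne_finset_zero hsupp
  -- mean = μ
  have hroot' : ((b : ℝ) - μ) * r ^ (k + 1) + ((μ : ℝ) - b - 1) * r ^ k
      + ((μ : ℝ) - a + 1) * r + ((a : ℝ) - μ) = 0 := by
    rw [fpoly, show b + 2 - a = k + 1 from by omega, ← hk] at hroot
    exact hroot
  have hkR : (k : ℝ) = (b : ℝ) + 1 - a := by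
    have h' : a + k = b + 1 := by omega
    have : ((a + k : ℕ) : ℝ) = ((b + 1 : ℕ) : ℝ) := by rw [h']
    push_cast at this; linarith
  have key2 : ∀ i ∈ Finset.range k, ((a + i : ℕ) : ℝ) * pstar a b r (a + i)
      = ((a : ℝ) * r ^ i + (i : ℝ) * r ^ i) * (1 - r) / (1 - r ^ k) := by
    intro i hi
    rw [key i hi]
    push_cast
    ring
  have hsum2 : ∑ n ∈ Finset.Icc a b, (n : ℝ) * pstar a b r n = (μ : ℝ) := by
    rw [← Finset.Ico_add_one_right_eq_Icc, Finset.sum_Ico_eq_sum_range, ← hk, Finset.sum_congr rfl key2,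
      ← Finset.sum_div, ← Finset.sum_mul, Finset.sum_add_distrib, ← Finset.mul_sum,
      div_eq_iff hD]
    have H := geomT' r k
    rw [hkR] at H
    apply mul_left_cancel₀ hr1'
    linear_combination (a : ℝ) * (1 - r) * geom_mul' r k + H + hroot'
  have hsupp2 : ∀ n ∉ Finset.Icc a b, (n : ℝ) * pstar a b r n = 0 := by
    intro n hn; rw [hsupp n hn, mul_zero]
  have hS2 : HasSum (fun n : ℕ => (n : ℝ) * pstar a b r n) (μ : ℝ) :=
    hsum2 ▸ hasSum_sum_of_ne_finset_zero hsupp2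
  -- nonnegativity
  have hnn : ∀ n, 0 ≤ pstar a b r n := by
    intro n
    rcases lt_or_ge n a with h | h
    · rw [hz1 n h]
    · rcases le_or_gt n b with h' | h'
      · rw [pstar_val r h h', ← hk, mul_div_assoc]
        exact le_of_lt (mul_pos (pow_pos hr _) hcpos)
      · rw [hz2 n h']
  -- lamg = r * lamr
  have hlam0 : lamr b (pstar a b r) = ∑ i ∈ Finset.range (b - a), pstar a b r (a + i) := by
    rw [lamr, ← Finset.sum_Ico_eq_sum_range]
    refine (Finset.sum_subset ?_ ?_).symm
    · intro x hx
      simp only [Finset.mem_Ico] at hx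
      simp only [Finset.mem_range]
      omega
    · intro x hx hx'
      simp only [Finset.mem_range] at hx
      simp only [Finset.mem_Ico] at hx'
      exact hz1 x (by omega)
  have hlamg : lamg a (pstar a b r) = r * lamr b (pstar a b r) := by
    rw [lamg, tsum_eq_sum (s := Finset.Icc (a + 1) b)
      (by
        intro ℓ hℓ
        simp only [Finset.mem_Icc, not_and_or, not_le] at hℓ
        split_ifs with h
        · exact hz2 ℓ (by omega)
        · rfl)]
    rw [← Finset.Ico_add_one_right_eq_Icc, Finset.sum_Ico_eq_sum_range, show b + 1 - (a + 1) = b - a from by omega,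
      hlam0, Finset.mul_sum]
    apply Finset.sum_congr rfl
    intro i hi
    simp only [Finset.mem_range] at hi
    rw [if_pos (by omega), show a + 1 + i = (a + i) + 1 from by omega]
    exact pstar_step r (by omega) (by omega)
  refine ⟨⟨hnn, hS1, hS2⟩, ?_⟩
  intro n
  rw [Lop, hlamg]
  rcases lt_or_ge n a with h | h
  · -- n < a
    rw [hz1 n h, hz1 (n - 1) (by omega), if_neg (show ¬ a ≤ n by omega)]
    simp
  · rcases eq_or_lt_of_le h with hna | hna
    · -- n = a
      have e3 : (if 1 ≤ n ∧ n ≤ b then pstar a b r (n - 1) else 0) = 0 := by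
        split_ifs with h3
        · exact hz1 _ (by omega)
        · rfl
      rw [e3, if_pos (show a ≤ n from h), if_neg (show ¬ a + 1 ≤ n by omega),
        if_pos (show n ≤ b - 1 by omega), ← hna, pstar_step r le_rfl (by omega)]
      ring
    · rcases lt_or_ge n b with hnb | hnb
      · -- a < n < b
        have e : pstar a b r n = r * pstar a b r (n - 1) := by
          have := pstar_step r (show a ≤ n - 1 by omega) (show n - 1 < b by omega)
          rwa [show n - 1 + 1 = n from by omega] at this
        rw [if_pos (show a ≤ n by omega), if_pos (show a + 1 ≤ n by omega),
          if_pos (show 1 ≤ n ∧ n ≤ b by omega), if_pos (show n ≤ b - 1 by omega),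
          pstar_step r (by omega) hnb, e]
        ring
      · rcases eq_or_lt_of_le hnb with hnb' | hnb'
        · -- n = b
          have e : pstar a b r n = r * pstar a b r (n - 1) := by
            have := pstar_step r (show a ≤ n - 1 by omega) (show n - 1 < b by omega)
            rwa [show n - 1 + 1 = n from by omega] at this
          rw [if_pos (show a ≤ n by omega), if_pos (show a + 1 ≤ n by omega),
            if_pos (show 1 ≤ n ∧ n ≤ b by omega), if_neg (show ¬ n ≤ b - 1 by omega),
            hz2 (n + 1) (by omega), e]
          ring
        · -- n > b
          rw [hz2 n hnb', hz2 (n + 1) (by omega), if_neg (show ¬ (1 ≤ n ∧ n ≤ b) by omega),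
            if_neg (show ¬ n ≤ b - 1 by omega)]
          simp
end

section
/- Let a, b, μ be natural numbers with a < μ < b, and let p ∈ V_μ satisfy p_n > 0 for all a ≤ n ≤ b. Then λ_r(p) > 0, λ_g(p) > 0, and the entropy production satisfies the inequality ∑_{n=a}^{b} L[p]_n · log p_n ≤ −λ_r(p)·log λ_r(p) · ∑_{n=b+1}^{∞} p_n − λ_g(p)·log λ_g(p) · ∑_{n=0}^{a−1} p_n. (Along a solution t ↦ p(t) of the mean-field ODE system p′_n = L[p]_n, the left-hand side equals the time derivative of the functional H_ab[p] = ∑_{n=0}^{a−1} p_n + ∑_{n=a}^{b} p_n log p_n + ∑_{n=b+1}^{∞} p_n.) -/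
open scoped BigOperators

/-- The tail sum `∑_{n≥m} p_n`. -/
noncomputable def tailSum (m : ℕ) (p : ℕ → ℝ) : ℝ := ∑' n : ℕ, if m ≤ n then p n else 0

private lemma log_aux (x y : ℝ) (hx : 0 < x) (hy : 0 < y) :
    (x - y) * (Real.log y - Real.log x) ≤ 0 := by
  rcases le_total x y with h | h
  · have hl : Real.log x ≤ Real.log y := Real.log_le_log hx h
    apply mul_nonpos_of_nonpos_of_nonneg <;> linarith
  · have hl : Real.log y ≤ Real.log x := Real.log_le_log hy h
    apply mul_nonpos_of_nonneg_of_nonpos <;> linarith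

private lemma sum_Ico_shift (f : ℕ → ℝ) (a b : ℕ) :
    ∑ n ∈ Finset.Ico (a+1) (b+1), f n = ∑ n ∈ Finset.Ico a b, f (n+1) := by
  rw [Finset.sum_Ico_eq_sum_range, Finset.sum_Ico_eq_sum_range, Nat.succ_sub_succ]
  exact Finset.sum_congr rfl fun i _ => by rw [show a + 1 + i = a + i + 1 by omega]

theorem entropy_production_bound (a b μ : ℕ) (hau : a < μ) (hub : μ < b)
    (p : ℕ → ℝ) (hp : memV μ p) (hpos : ∀ n, a ≤ n → n ≤ b → 0 < p n) :
    0 < lamr b p ∧ 0 < lamg a p ∧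
      ∑ n ∈ Finset.Icc a b, Lop a b p n * Real.log (p n) ≤
        -(lamr b p * Real.log (lamr b p)) * tailSum (b + 1) p
          - (lamg a p * Real.log (lamg a p)) * ∑ n ∈ Finset.range a, p n := by
  obtain ⟨hnn, hs1, -⟩ := hp
  have hab : a < b := hau.trans hub
  have hab1 : a + 1 ≤ b := hab
  have hsp : Summable p := hs1.summable
  have htsum : ∑' n, p n = 1 := hs1.tsum_eq
  have hple1 : ∀ n, p n ≤ 1 := fun n => le_hasSum hs1 n (fun j _ => hnn j)
  set c := lamr b p with hc
  set g := lamg a p with hg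
  set q : ℕ → ℝ := fun n => Real.log (p n) with hq
  set T := tailSum (b + 1) p with hT
  set S := ∑ n ∈ Finset.range a, p n with hS
  -- basic positivity / bounds
  have hpa : 0 < p a := hpos a le_rfl hab.le
  have hpb : 0 < p b := hpos b hab.le le_rfl
  have hc_pos : 0 < c := by
    have h1 : p a ≤ c := Finset.single_le_sum (fun i _ => hnn i) (Finset.mem_range.2 hab)
    linarith
  have hc_le : c ≤ 1 := by
    rw [hc, lamr, ← htsum]
    exact Summable.sum_le_tsum _ (fun i _ => hnn i) hsp
  have hfnn : ∀ n, 0 ≤ (if a + 1 ≤ n then p n else 0) := by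
    intro n; split <;> simp [hnn n]
  have hfle : ∀ n, (if a + 1 ≤ n then p n else 0) ≤ p n := by
    intro n; split <;> simp [hnn n]
  have hfsum : Summable (fun n => if a + 1 ≤ n then p n else 0) :=
    Summable.of_nonneg_of_le hfnn hfle hsp
  have hg_pos : 0 < g := by
    have h1 : (if a + 1 ≤ b then p b else 0) ≤ g :=
      Summable.le_tsum hfsum b (fun j _ => hfnn j)
    rw [if_pos hab1] at h1; linarith
  have hg_le : g ≤ 1 := by
    rw [hg, lamg, ← htsum]
    exact Summable.tsum_le_tsum hfle hfsum hsp
  have hhnn : ∀ n, 0 ≤ (if b + 1 ≤ n then p n else 0) := by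
    intro n; split <;> simp [hnn n]
  have hhle : ∀ n, (if b + 1 ≤ n then p n else 0) ≤ p n := by
    intro n; split <;> simp [hnn n]
  have hhsum : Summable (fun n => if b + 1 ≤ n then p n else 0) :=
    Summable.of_nonneg_of_le hhnn hhle hsp
  have hT_nn : 0 ≤ T := by
    rw [hT, tailSum]; exact tsum_nonneg hhnn
  have hS_nn : 0 ≤ S := Finset.sum_nonneg fun i _ => hnn i
  have hlc : Real.log c ≤ 0 := Real.log_nonpos hc_pos.le hc_le
  have hlg : Real.log g ≤ 0 := Real.log_nonpos hg_pos.le hg_le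
  -- splitting of g into interior + tail
  have hsplit : g = (∑ n ∈ Finset.Icc (a+1) b, p n) + T := by
    have hpt : ∀ n : ℕ, (if a + 1 ≤ n then p n else 0) =
        (if n ∈ Finset.Icc (a+1) b then p n else 0) + (if b + 1 ≤ n then p n else 0) := by
      intro n
      simp only [Finset.mem_Icc]
      split_ifs <;> first | (exfalso; omega) | ring
    have hindsum : Summable (fun n => if n ∈ Finset.Icc (a+1) b then p n else 0) :=
      summable_of_ne_finset_zero (s := Finset.Icc (a+1) b) (fun n hn => if_neg hn)
    rw [hg, lamg, tsum_congr hpt, Summable.tsum_add hindsum hhsum, hT, tailSum]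
    congr 1
    rw [tsum_eq_sum (s := Finset.Icc (a+1) b) (fun n hn => if_neg hn)]
    exact Finset.sum_congr rfl fun n hn => if_pos hn
  have hcS : ∑ n ∈ Finset.Ico a b, p n = c - S := by
    rw [hc, lamr, hS, Finset.sum_Ico_eq_sub _ hab.le]
  have hgT : ∑ n ∈ Finset.Ico a b, p (n+1) = g - T := by
    rw [← sum_Ico_shift, Finset.Ico_add_one_right_eq_Icc, hsplit]; ring
  -- the structural identity for the LHS
  have hIcc : Finset.Icc a b = insert b (Finset.Ico a b) := by
    rw [Finset.Ico_insert_right hab.le]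
  have hbd : (if 1 ≤ a then p (a-1) * q a else 0) ≤ 0 := by
    split
    · exact mul_nonpos_of_nonneg_of_nonpos (hnn _) (Real.log_nonpos hpa.le (hple1 a))
    · exact le_rfl
  have hqb : q b ≤ 0 := Real.log_nonpos hpb.le (hple1 b)
  have hLHS : ∑ n ∈ Finset.Icc a b, Lop a b p n * q n
      = (∑ n ∈ Finset.Ico a b, (c * p (n+1) - g * p n) * (q n - q (n+1)))
        + c * (p (b+1) * q b) + g * (if 1 ≤ a then p (a-1) * q a else 0) := by
    have e1 : ∀ n ∈ Finset.Icc a b, Lop a b p n * q n =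
        c * (p (n+1) * q n) - c * (if a+1 ≤ n then p n * q n else 0)
          + (g * (if 1 ≤ n ∧ n ≤ b then p (n-1) * q n else 0)
            - g * (if n ≤ b-1 then p n * q n else 0)) := by
      intro n hn
      rw [Finset.mem_Icc] at hn
      simp only [Lop, ← hc, ← hg, if_pos hn.1]
      split_ifs <;> ring
    rw [Finset.sum_congr rfl e1]
    rw [Finset.sum_add_distrib, Finset.sum_sub_distrib, Finset.sum_sub_distrib,
      ← Finset.mul_sum, ← Finset.mul_sum, ← Finset.mul_sum, ← Finset.mul_sum]
    have hS1 : ∑ n ∈ Finset.Icc a b, p (n+1) * q n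
        = ∑ n ∈ Finset.Ico a b, p (n+1) * q n + p (b+1) * q b := by
      rw [hIcc, Finset.sum_insert (by simp)]; ring
    have hS2 : (∑ n ∈ Finset.Icc a b, if a+1 ≤ n then p n * q n else 0)
        = ∑ n ∈ Finset.Ico a b, p (n+1) * q (n+1) := by
      rw [← Finset.sum_filter]
      have hfeq : (Finset.Icc a b).filter (fun n => a+1 ≤ n) = Finset.Ico (a+1) (b+1) := by
        ext n; simp only [Finset.mem_filter, Finset.mem_Icc, Finset.mem_Ico]; omega
      rw [hfeq, sum_Ico_shift]
    have hS4 : (∑ n ∈ Finset.Icc a b, if n ≤ b-1 then p n * q n else 0)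
        = ∑ n ∈ Finset.Ico a b, p n * q n := by
      rw [← Finset.sum_filter]
      congr 1
      ext n; simp only [Finset.mem_filter, Finset.mem_Icc, Finset.mem_Ico]; omega
    have hS3 : (∑ n ∈ Finset.Icc a b, if 1 ≤ n ∧ n ≤ b then p (n-1) * q n else 0)
        = (if 1 ≤ a then p (a-1) * q a else 0) + ∑ n ∈ Finset.Ico a b, p n * q (n+1) := by
      rw [← Finset.sum_filter]
      have hfeq : (Finset.Icc a b).filter (fun n => 1 ≤ n ∧ n ≤ b)
          = Finset.Ico (max a 1) (b+1) := by
        ext n; simp only [Finset.mem_filter, Finset.mem_Icc, Finset.mem_Ico]; omega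
      rw [hfeq]
      by_cases ha : 1 ≤ a
      · rw [if_pos ha, show max a 1 = (a-1)+1 by omega, sum_Ico_shift]
        simp only [Nat.add_sub_cancel]
        have h2 : Finset.Ico (a-1) b = insert (a-1) (Finset.Ico a b) := by
          ext n; simp only [Finset.mem_Ico, Finset.mem_insert]; omega
        rw [h2, Finset.sum_insert (by simp only [Finset.mem_Ico]; omega),
          show a - 1 + 1 = a by omega]
      · rw [if_neg ha, show max a 1 = 0 + 1 by omega, sum_Ico_shift,
          show a = 0 by omega]
        simp only [Nat.add_sub_cancel]
        exact (zero_add _).symm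
    rw [hS1, hS2, hS3, hS4]
    have hY : ∑ n ∈ Finset.Ico a b, (c * p (n+1) - g * p n) * (q n - q (n+1))
        = c * (∑ n ∈ Finset.Ico a b, p (n+1) * q n)
          - c * (∑ n ∈ Finset.Ico a b, p (n+1) * q (n+1))
          + (g * (∑ n ∈ Finset.Ico a b, p n * q (n+1))
            - g * (∑ n ∈ Finset.Ico a b, p n * q n)) := by
      rw [Finset.mul_sum, Finset.mul_sum, Finset.mul_sum, Finset.mul_sum,
        ← Finset.sum_sub_distrib, ← Finset.sum_sub_distrib, ← Finset.sum_add_distrib]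
      exact Finset.sum_congr rfl fun n _ => by ring
    rw [hY]; ring
  -- pointwise bound
  have hpoint : ∀ n ∈ Finset.Ico a b,
      (c * p (n+1) - g * p n) * (q n - q (n+1)) ≤
        (c * p (n+1) - g * p n) * (Real.log c - Real.log g) := by
    intro n hn
    rw [Finset.mem_Ico] at hn
    have hpn : 0 < p n := hpos n hn.1 hn.2.le
    have hpn1 : 0 < p (n+1) := hpos (n+1) (by omega) (by omega)
    have h0 := log_aux (c * p (n+1)) (g * p n) (mul_pos hc_pos hpn1) (mul_pos hg_pos hpn)
    rw [Real.log_mul hc_pos.ne' hpn1.ne', Real.log_mul hg_pos.ne' hpn.ne'] at h0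
    nlinarith [h0]
  have hsumle : (∑ n ∈ Finset.Ico a b, (c * p (n+1) - g * p n) * (q n - q (n+1)))
      ≤ (c * (g - T) - g * (c - S)) * (Real.log c - Real.log g) := by
    calc ∑ n ∈ Finset.Ico a b, (c * p (n+1) - g * p n) * (q n - q (n+1))
        ≤ ∑ n ∈ Finset.Ico a b, (c * p (n+1) - g * p n) * (Real.log c - Real.log g) :=
          Finset.sum_le_sum hpoint
      _ = (c * (g - T) - g * (c - S)) * (Real.log c - Real.log g) := by
          rw [← Finset.sum_mul]
          congr 1
          rw [Finset.sum_sub_distrib, ← Finset.mul_sum, ← Finset.mul_sum, hcS, hgT]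
  refine ⟨hc_pos, hg_pos, ?_⟩
  rw [hLHS]
  have h1 : g * S * Real.log c ≤ 0 :=
    mul_nonpos_of_nonneg_of_nonpos (mul_nonneg hg_pos.le hS_nn) hlc
  have h2 : c * T * Real.log g ≤ 0 :=
    mul_nonpos_of_nonneg_of_nonpos (mul_nonneg hc_pos.le hT_nn) hlg
  have h3 : c * (p (b+1) * q b) ≤ 0 :=
    mul_nonpos_of_nonneg_of_nonpos hc_pos.le
      (mul_nonpos_of_nonneg_of_nonpos (hnn _) hqb)
  have h4 : g * (if 1 ≤ a then p (a-1) * q a else 0) ≤ 0 :=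
    mul_nonpos_of_nonneg_of_nonpos hg_pos.le hbd
  nlinarith [hsumle, h1, h2, h3, h4]
end

section
/- Let a, b, μ be natural numbers with a < μ < b, let K > 1 be a real number, and let p : [0,∞) → (ℕ → ℝ) be such that p(t) ∈ V_μ for all t ≥ 0, each component t ↦ p_n(t) is differentiable with p_n′(t) = L[p(t)]_n, the series y(t) := ∑_{n≥0} Kⁿ·p_n(t) converges for every t ≥ 0 with y(0) < ∞, and y is differentiable with y′(t) = ∑_{n≥0} Kⁿ·L[p(t)]_n. Then for all t ≥ 0, y(t) ≤ max{ (K^{b+1} + K^a)/(1 − μ/b), y(0) }. -/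
set_option maxHeartbeats 1000000


open scoped BigOperators

lemma key_deriv_bound (a b μ : ℕ) (hb : 1 ≤ b) (K : ℝ) (hK : 1 < K) (q : ℕ → ℝ)
    (hq : memV μ q) (hs : Summable (fun n : ℕ => K ^ n * q n)) :
    ∑' n : ℕ, K ^ n * Lop a b q n ≤
      lamr b q * (1 - 1/K) * (K ^ b + K ^ a - ∑' n : ℕ, K ^ n * q n) := by
  obtain ⟨hq0, hq1, hqμ⟩ := hq
  have hK0 : (0 : ℝ) < K := lt_trans one_pos hK
  have hKn : ∀ n : ℕ, 0 ≤ K ^ n * q n := fun n => mul_nonneg (pow_nonneg hK0.le n) (hq0 n)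
  set u : ℕ → ℝ := fun n => if a ≤ n then K ^ n * q (n + 1) else 0 with hu_def
  set v : ℕ → ℝ := fun n => if a + 1 ≤ n then K ^ n * q n else 0 with hv_def
  set w : ℕ → ℝ := fun n => if 1 ≤ n ∧ n ≤ b then K ^ n * q (n - 1) else 0 with hw_def
  set x : ℕ → ℝ := fun n => if n ≤ b - 1 then K ^ n * q n else 0 with hx_def
  have hshift : Summable (fun n : ℕ => K ^ (n + 1) * q (n + 1)) :=
    (summable_nat_add_iff 1).2 hs
  have hsu : Summable u := by
    apply Summable.of_nonneg_of_le (fun n => ?_) (fun n => ?_) hshift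
    · simp only [hu_def]; split_ifs
      · exact mul_nonneg (pow_nonneg hK0.le n) (hq0 _)
      · exact le_refl 0
    · simp only [hu_def]; split_ifs
      · exact mul_le_mul_of_nonneg_right
          (pow_le_pow_right₀ hK.le (Nat.le_succ n)) (hq0 _)
      · exact mul_nonneg (pow_nonneg hK0.le _) (hq0 _)
  have hsv : Summable v := by
    apply Summable.of_nonneg_of_le (fun n => ?_) (fun n => ?_) hs
    · simp only [hv_def]; split_ifs
      · exact hKn n
      · exact le_refl 0
    · simp only [hv_def]; split_ifs
      · exact le_refl _
      · exact hKn n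
  have hsw : Summable w := by
    apply summable_of_ne_finset_zero (s := Finset.range (b + 1))
    intro n hn
    simp only [Finset.mem_range, not_lt] at hn
    simp only [hw_def]
    rw [if_neg]; omega
  have hsx : Summable x := by
    apply summable_of_ne_finset_zero (s := Finset.range b)
    intro n hn
    simp only [Finset.mem_range, not_lt] at hn
    simp only [hx_def]
    rw [if_neg]; omega
  -- rewrite summand
  have hfun : (fun n : ℕ => K ^ n * Lop a b q n)
      = fun n => lamr b q * (u n - v n) + lamg a q * (w n - x n) := by
    funext n
    simp only [Lop, hu_def, hv_def, hw_def, hx_def]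
    split_ifs <;> ring
  set T : ℝ := ∑ n ∈ Finset.range b, K ^ n * q n with hT_def
  set V : ℝ := ∑' n, v n with hV_def
  have hU : ∑' n, u n = V / K := by
    have h1 : K * ∑' n, u n = ∑' n, v (n + 1) := by
      rw [← tsum_mul_left]
      congr 1
      funext n
      simp only [hu_def, hv_def]
      split_ifs with h1 h2
      · ring
      · omega
      · omega
      · ring
    have h2 : V = v 0 + ∑' n, v (n + 1) := Summable.tsum_eq_zero_add hsv
    have h3 : v 0 = 0 := by simp [hv_def]
    field_simp
    rw [mul_comm, h1]
    rw [h2, h3, zero_add]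
  have hX : ∑' n, x n = T := by
    rw [tsum_eq_sum (s := Finset.range b)]
    · apply Finset.sum_congr rfl
      intro n hn
      simp only [Finset.mem_range] at hn
      simp only [hx_def]
      rw [if_pos]; omega
    · intro n hn
      simp only [Finset.mem_range, not_lt] at hn
      simp only [hx_def]; rw [if_neg]; omega
  have hW : ∑' n, w n = K * T := by
    rw [tsum_eq_sum (s := Finset.range (b + 1))]
    · rw [Finset.sum_range_succ']
      have hw0 : w 0 = 0 := by simp [hw_def]
      rw [hw0, add_zero, hT_def, Finset.mul_sum]
      apply Finset.sum_congr rfl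
      intro n hn
      simp only [Finset.mem_range] at hn
      simp only [hw_def]
      rw [if_pos (by omega)]
      simp only [Nat.add_sub_cancel]
      ring
    · intro n hn
      simp only [Finset.mem_range, not_lt] at hn
      simp only [hw_def]; rw [if_neg]; omega
  have htsum : ∑' n : ℕ, K ^ n * Lop a b q n
      = lamr b q * (V / K - V) + lamg a q * (K * T - T) := by
    rw [hfun]
    rw [Summable.tsum_add (((hsu.sub hsv).mul_left _)) (((hsw.sub hsx).mul_left _)),
      tsum_mul_left, tsum_mul_left, Summable.tsum_sub hsu hsv, Summable.tsum_sub hsw hsx, hU, hX, hW]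
  rw [htsum]
  -- now the inequality
  set y : ℝ := ∑' n : ℕ, K ^ n * q n with hy_def
  set lr : ℝ := lamr b q with hlr_def
  set lg : ℝ := lamg a q with hlg_def
  have hlr0 : 0 ≤ lr := Finset.sum_nonneg fun i _ => hq0 i
  have hlg0 : 0 ≤ lg := by
    rw [hlg_def, lamg]
    apply tsum_nonneg
    intro n; split_ifs; exacts [hq0 n, le_rfl]
  have hsg : Summable (fun ℓ : ℕ => if a + 1 ≤ ℓ then q ℓ else 0) := by
    apply Summable.of_nonneg_of_le (fun n => ?_) (fun n => ?_) hq1.summable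
    · split_ifs; exacts [hq0 n, le_refl 0]
    · split_ifs; exacts [le_refl _, hq0 n]
  have hlg1 : lg ≤ 1 := by
    rw [hlg_def, lamg]
    calc ∑' ℓ : ℕ, (if a + 1 ≤ ℓ then q ℓ else 0) ≤ ∑' ℓ, q ℓ := by
          apply Summable.tsum_le_tsum _ hsg hq1.summable
          intro n; split_ifs; exacts [le_refl _, hq0 n]
      _ = 1 := hq1.tsum_eq
  have hT0 : 0 ≤ T := Finset.sum_nonneg fun i _ => hKn i
  have hTle : T ≤ K ^ (b - 1) * lr := by
    rw [hlr_def, lamr, Finset.mul_sum]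
    apply Finset.sum_le_sum
    intro i hi
    simp only [Finset.mem_range] at hi
    exact mul_le_mul_of_nonneg_right (pow_le_pow_right₀ hK.le (by omega)) (hq0 i)
  have hVy : y - K ^ a ≤ V := by
    set d : ℕ → ℝ := fun n => if a + 1 ≤ n then 0 else K ^ n * q n with hd_def
    have hsd : Summable d := by
      apply summable_of_ne_finset_zero (s := Finset.range (a + 1))
      intro n hn
      simp only [Finset.mem_range, not_lt] at hn
      simp only [hd_def]; rw [if_pos]; omega
    have hsplit : y = V + ∑' n, d n := by
      rw [hy_def, hV_def, ← Summable.tsum_add hsv hsd]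
      congr 1; funext n
      simp only [hv_def, hd_def]
      split_ifs <;> ring
    have hdle : ∑' n, d n ≤ K ^ a := by
      rw [tsum_eq_sum (s := Finset.range (a + 1))]
      · calc ∑ n ∈ Finset.range (a + 1), d n
            ≤ ∑ n ∈ Finset.range (a + 1), K ^ a * q n := by
              apply Finset.sum_le_sum
              intro i hi
              simp only [Finset.mem_range] at hi
              simp only [hd_def]
              rw [if_neg (by omega)]
              exact mul_le_mul_of_nonneg_right (pow_le_pow_right₀ hK.le (by omega)) (hq0 i)
          _ = K ^ a * ∑ n ∈ Finset.range (a + 1), q n := (Finset.mul_sum _ _ _).symm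
          _ ≤ K ^ a * 1 := by
              apply mul_le_mul_of_nonneg_left _ (pow_nonneg hK0.le a)
              exact sum_le_hasSum _ (fun i _ => hq0 i) hq1
          _ = K ^ a := mul_one _
      · intro n hn
        simp only [Finset.mem_range, not_lt] at hn
        simp only [hd_def]; rw [if_pos (by omega)]
    linarith [hsplit, hdle]
  -- final arithmetic
  have hKb : K ^ b = K * K ^ (b - 1) := by
    rw [← pow_succ']
    congr 1; omega
  have hc0 : 0 ≤ lr * (1 - 1 / K) := by
    apply mul_nonneg hlr0
    have : 1 / K < 1 := by rw [div_lt_one hK0]; exact hK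
    linarith
  have h1 : lr * (V / K - V) ≤ -(lr * (1 - 1/K)) * (y - K ^ a) := by
    have : lr * (V / K - V) = -(lr * (1 - 1/K)) * V := by field_simp; ring
    rw [this]
    nlinarith [hVy, hc0]
  have h2 : lg * (K * T - T) ≤ lr * (1 - 1/K) * K ^ b := by
    have hKT : 0 ≤ K * T - T := by nlinarith
    calc lg * (K * T - T) ≤ 1 * (K * T - T) := mul_le_mul_of_nonneg_right hlg1 hKT
      _ = (K - 1) * T := by ring
      _ ≤ (K - 1) * (K ^ (b - 1) * lr) := by
          apply mul_le_mul_of_nonneg_left hTle (by linarith)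
      _ = lr * (1 - 1/K) * K ^ b := by
          rw [hKb]; field_simp
  nlinarith [h1, h2]

theorem uniform_exponential_moment_bound (a b μ : ℕ) (hau : a < μ) (hub : μ < b)
    (K : ℝ) (hK : 1 < K) (p : ℝ → ℕ → ℝ)
    (hV : ∀ t : ℝ, 0 ≤ t → memV μ (p t))
    (hODE : ∀ n : ℕ, ∀ t : ℝ, 0 ≤ t →
      HasDerivWithinAt (fun s => p s n) (Lop a b (p t) n) (Set.Ici (0 : ℝ)) t)
    (hsum : ∀ t : ℝ, 0 ≤ t → Summable (fun n : ℕ => K ^ n * p t n))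
    (hy : ∀ t : ℝ, 0 ≤ t →
      HasDerivWithinAt (fun s => ∑' n : ℕ, K ^ n * p s n)
        (∑' n : ℕ, K ^ n * Lop a b (p t) n) (Set.Ici (0 : ℝ)) t) :
    ∀ t : ℝ, 0 ≤ t →
      (∑' n : ℕ, K ^ n * p t n) ≤
        max ((K ^ (b + 1) + K ^ a) / (1 - (μ : ℝ) / b)) (∑' n : ℕ, K ^ n * p 0 n) := by
  intro t ht
  set f : ℝ → ℝ := fun s => ∑' n : ℕ, K ^ n * p s n with hf_def
  set M : ℝ := (K ^ (b + 1) + K ^ a) / (1 - (μ : ℝ) / b) with hM_def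
  set B : ℝ := max M (f 0) with hB_def
  show f t ≤ B
  have hK0 : (0 : ℝ) < K := lt_trans one_pos hK
  have hb1 : 1 ≤ b := by omega
  have hbpos : (0 : ℝ) < b := by exact_mod_cast (by omega : 0 < b)
  have hd0 : 0 < 1 - (μ : ℝ) / b := by
    have : (μ : ℝ) / b < 1 := (div_lt_one hbpos).2 (by exact_mod_cast hub)
    linarith
  have hd1 : 1 - (μ : ℝ) / b ≤ 1 := by
    have : 0 ≤ (μ : ℝ) / b := div_nonneg (Nat.cast_nonneg μ) hbpos.le
    linarith
  have hM : K ^ b + K ^ a ≤ M := by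
    have hXnn : 0 ≤ K ^ (b + 1) + K ^ a := by positivity
    have h1 : K ^ b + K ^ a ≤ K ^ (b + 1) + K ^ a := by
      rw [pow_succ]
      nlinarith [pow_pos hK0 b]
    have h2 : K ^ (b + 1) + K ^ a ≤ M := by
      rw [hM_def, le_div_iff₀ hd0]
      nlinarith
    linarith
  have hBM : K ^ b + K ^ a ≤ B := le_trans hM (le_max_left _ _)
  have hcont : ContinuousOn f (Set.Icc 0 t) := fun s hs =>
    ((hy s hs.1).continuousWithinAt).mono Set.Icc_subset_Ici_self
  -- bound for every ε > 0
  have hkey : ∀ ε : ℝ, 0 < ε → f t ≤ B + ε + ε * t := by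
    intro ε hε
    have hB' : ∀ s : ℝ, HasDerivAt (fun s => B + ε + ε * s) ε s := by
      intro s
      simpa using ((hasDerivAt_id s).const_mul ε).const_add (B + ε)
    have := image_le_of_deriv_right_lt_deriv_boundary (f := f)
      (f' := fun s => ∑' n : ℕ, K ^ n * Lop a b (p s) n) (a := 0) (b := t)
      (B := fun s => B + ε + ε * s) (B' := fun _ => ε) hcont
      (fun x hx => (hy x hx.1).mono (Set.Ici_subset_Ici.2 hx.1))
      (by simp only [mul_zero, add_zero, hB_def]; linarith [le_max_right M (f 0)])
      hB'
      (fun x hx hfx => by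
        have hx0 : 0 ≤ x := hx.1
        have hfx' : f x = B + ε + ε * x := hfx
        have hfxB : K ^ b + K ^ a < f x := by
          rw [hfx']; nlinarith [mul_nonneg hε.le hx0]
        obtain ⟨hq0, hq1, hqμ⟩ := hV x hx0
        have hlr0 : 0 ≤ lamr b (p x) := Finset.sum_nonneg fun i _ => hq0 i
        have h1K : 0 ≤ 1 - 1 / K := by
          have : 1 / K < 1 := by rw [div_lt_one hK0]; exact hK
          linarith
        have hkb := key_deriv_bound a b μ hb1 K hK (p x) (hV x hx0) (hsum x hx0)
        have : lamr b (p x) * (1 - 1 / K) * (K ^ b + K ^ a - ∑' n : ℕ, K ^ n * p x n) ≤ 0 := by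
          apply mul_nonpos_of_nonneg_of_nonpos (mul_nonneg hlr0 h1K)
          simp only [hf_def] at hfxB
          linarith
        calc ∑' n : ℕ, K ^ n * Lop a b (p x) n
            ≤ lamr b (p x) * (1 - 1 / K) * (K ^ b + K ^ a - ∑' n : ℕ, K ^ n * p x n) := hkb
          _ ≤ 0 := this
          _ < ε := hε)
    exact this ⟨ht, le_rfl⟩
  -- take ε → 0
  have h1t : 0 < 1 + t := by linarith
  apply le_of_forall_pos_le_add
  intro δ hδ
  have := hkey (δ / (1 + t)) (div_pos hδ h1t)
  have heq : B + δ / (1 + t) + δ / (1 + t) * t = B + δ := by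
    field_simp
    ring
  linarith [this, heq.le]
end

section
/- Let a, b, μ be natural numbers with a < μ < b, let K > 1 be a real number, and let p ∈ V_μ satisfy ∑_{n≥0} Kⁿ·p_n < ∞. Then the series ∑_{n≥0} Kⁿ·L[p]_n converges and satisfies ∑_{n≥0} Kⁿ·L[p]_n ≤ (K−1)·K^b + (1 − 1/K)·K^a − (1 − μ/b)·(1 − 1/K)·∑_{n≥0} Kⁿ·p_n. -/
open scoped BigOperators

theorem exponential_moment_derivative_bound (a b μ : ℕ) (hau : a < μ) (hub : μ < b)
    (K : ℝ) (hK : 1 < K) (p : ℕ → ℝ) (hp : memV μ p)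
    (hsum : Summable (fun n : ℕ => K ^ n * p n)) :
    Summable (fun n : ℕ => K ^ n * Lop a b p n) ∧
      (∑' n : ℕ, K ^ n * Lop a b p n) ≤
        (K - 1) * K ^ b + (1 - 1 / K) * K ^ a
          - (1 - (μ : ℝ) / b) * (1 - 1 / K) * ∑' n : ℕ, K ^ n * p n := by

  obtain ⟨hpos, hsum1, hmean⟩ := hp
  have hK0 : (0:ℝ) < K := lt_trans one_pos hK
  have hKne : K ≠ 0 := ne_of_gt hK0
  have hb1 : 1 ≤ b := by omega
  have hbR : (0:ℝ) < (b:ℝ) := by exact_mod_cast (show 0 < b by omega)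
  set q : ℕ → ℝ := fun n => K ^ n * p n with hq_def
  have hqnn : ∀ n, 0 ≤ q n := fun n => mul_nonneg (pow_nonneg hK0.le n) (hpos n)
  have hq : Summable q := hsum
  have hps : Summable p := hsum1.summable
  -- the four pieces
  set g1 : ℕ → ℝ := fun n => if a ≤ n then K ^ n * p (n+1) else 0 with hg1
  set g2 : ℕ → ℝ := fun n => if a + 1 ≤ n then q n else 0 with hg2
  set g3 : ℕ → ℝ := fun n => if 1 ≤ n ∧ n ≤ b then K ^ n * p (n-1) else 0 with hg3
  set g4 : ℕ → ℝ := fun n => if n ≤ b - 1 then q n else 0 with hg4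
  have key : ∀ n, K ^ n * Lop a b p n
      = lamr b p * (g1 n - g2 n) + lamg a p * (g3 n - g4 n) := by
    intro n
    simp only [Lop, hg1, hg2, hg3, hg4, hq_def]
    split_ifs <;> ring
  -- summability of the pieces
  have hg2s : Summable g2 := by
    refine Summable.of_nonneg_of_le (fun n => ?_) (fun n => ?_) hq
    · simp only [hg2]; split_ifs; exacts [hqnn n, le_refl 0]
    · simp only [hg2]; split_ifs; exacts [le_refl _, hqnn n]
  have hg4s : Summable g4 := by
    refine Summable.of_nonneg_of_le (fun n => ?_) (fun n => ?_) hq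
    · simp only [hg4]; split_ifs; exacts [hqnn n, le_refl 0]
    · simp only [hg4]; split_ifs; exacts [le_refl _, hqnn n]
  have hshift : ∀ n, g1 n = K⁻¹ * g2 (n + 1) := by
    intro n
    simp only [hg1, hg2, hq_def]
    by_cases h : a ≤ n
    · rw [if_pos h, if_pos (by omega)]
      rw [pow_succ]
      field_simp
    · rw [if_neg h, if_neg (by omega), mul_zero]
  have hg1s : Summable g1 := by
    rw [show g1 = fun n => K⁻¹ * g2 (n+1) from funext hshift]
    exact ((summable_nat_add_iff 1).2 hg2s).mul_left K⁻¹
  have hg3supp : ∀ n ∉ Finset.range (b+1), g3 n = 0 := by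
    intro n hn
    simp only [Finset.mem_range] at hn
    simp only [hg3]
    rw [if_neg (by omega)]
  have hg3s : Summable g3 := summable_of_ne_finset_zero hg3supp
  -- abbreviations for sums
  set A : ℝ := ∑' n, g2 n with hA
  set B : ℝ := ∑ n ∈ Finset.range b, q n with hB
  set T : ℝ := ∑' n, q n with hT
  -- tsum of g1
  have htg1 : ∑' n, g1 n = K⁻¹ * A := by
    rw [show g1 = fun n => K⁻¹ * g2 (n+1) from funext hshift, tsum_mul_left]
    congr 1
    have h0 : g2 0 = 0 := by simp [hg2]
    have := Summable.tsum_eq_zero_add hg2s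
    rw [h0, zero_add] at this
    exact this.symm
  -- tsum of g3
  have htg3 : ∑' n, g3 n = K * B := by
    rw [tsum_eq_sum hg3supp, Finset.sum_range_succ']
    have h0 : g3 0 = 0 := by simp [hg3]
    rw [h0, add_zero, hB, Finset.mul_sum]
    refine Finset.sum_congr rfl (fun i hi => ?_)
    simp only [Finset.mem_range] at hi
    simp only [hg3, hq_def]
    rw [if_pos (by omega)]
    simp only [Nat.add_sub_cancel]
    rw [pow_succ]
    ring
  -- tsum of g4
  have hg4supp : ∀ n ∉ Finset.range b, g4 n = 0 := by
    intro n hn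
    simp only [Finset.mem_range] at hn
    simp only [hg4]
    rw [if_neg (by omega)]
  have htg4 : ∑' n, g4 n = B := by
    rw [tsum_eq_sum hg4supp, hB]
    refine Finset.sum_congr rfl (fun i hi => ?_)
    simp only [Finset.mem_range] at hi
    simp only [hg4]
    rw [if_pos (by omega)]
  -- summability of the full series
  have hLsum : Summable (fun n : ℕ => K ^ n * Lop a b p n) := by
    rw [show (fun n : ℕ => K ^ n * Lop a b p n)
        = fun n => lamr b p * (g1 n - g2 n) + lamg a p * (g3 n - g4 n) from funext key]
    exact (((hg1s.sub hg2s).mul_left _).add ((hg3s.sub hg4s).mul_left _))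
  -- the value of the full series
  have hLval : (∑' n : ℕ, K ^ n * Lop a b p n)
      = lamr b p * (K⁻¹ * A - A) + lamg a p * (K * B - B) := by
    rw [show (fun n : ℕ => K ^ n * Lop a b p n)
        = fun n => lamr b p * (g1 n - g2 n) + lamg a p * (g3 n - g4 n) from funext key]
    rw [Summable.tsum_add ((hg1s.sub hg2s).mul_left _) ((hg3s.sub hg4s).mul_left _),
      tsum_mul_left, tsum_mul_left, Summable.tsum_sub hg1s hg2s, Summable.tsum_sub hg3s hg4s,
      htg1, htg3, htg4]
  -- basic facts on lamr and lamg
  have htsp : ∑' n, p n = 1 := hsum1.tsum_eq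
  have hlr_nonneg : 0 ≤ lamr b p :=
    Finset.sum_nonneg (fun i _ => hpos i)
  have hlr_le : lamr b p ≤ 1 := by
    rw [← htsp]
    exact Summable.sum_le_tsum _ (fun n _ => hpos n) hps
  set r : ℕ → ℝ := fun n => if b ≤ n then p n else 0 with hr
  have hrs : Summable r := by
    refine Summable.of_nonneg_of_le (fun n => ?_) (fun n => ?_) hps
    · simp only [hr]; split_ifs; exacts [hpos n, le_refl 0]
    · simp only [hr]; split_ifs; exacts [le_refl _, hpos n]
  have hsplit : lamr b p + ∑' n, r n = 1 := by
    have h1 : ∀ n ∉ Finset.range b, (if n < b then p n else 0) = 0 := by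
      intro n hn; simp only [Finset.mem_range] at hn; rw [if_neg (by omega)]
    have h2 : Summable (fun n => if n < b then p n else 0) :=
      summable_of_ne_finset_zero h1
    have h3 : (∑' n, if n < b then p n else 0) = lamr b p := by
      rw [tsum_eq_sum h1, lamr]
      refine Finset.sum_congr rfl (fun i hi => ?_)
      simp only [Finset.mem_range] at hi
      rw [if_pos hi]
    calc lamr b p + ∑' n, r n = ∑' n, ((if n < b then p n else 0) + r n) := by
          rw [Summable.tsum_add h2 hrs, h3]
      _ = ∑' n, p n := by
          refine tsum_congr (fun n => ?_)
          simp only [hr]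
          split_ifs with h h' h' <;> first | omega | simp
      _ = 1 := htsp
  have hmarkov : ∑' n, r n ≤ (μ:ℝ) / b := by
    rw [ge_iff_le.symm, ge_iff_le, le_div_iff₀ hbR, mul_comm]
    calc (b:ℝ) * ∑' n, r n = ∑' n, (b:ℝ) * r n := by rw [tsum_mul_left]
      _ ≤ ∑' n : ℕ, (n:ℝ) * p n := by
          refine Summable.tsum_le_tsum (fun n => ?_) (hrs.mul_left _) hmean.summable
          simp only [hr]
          split_ifs with h
          · exact mul_le_mul_of_nonneg_right (by exact_mod_cast h) (hpos n)
          · rw [mul_zero]; exact mul_nonneg (Nat.cast_nonneg n) (hpos n)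
      _ = (μ:ℝ) := hmean.tsum_eq
  have hlr_ge : 1 - (μ:ℝ)/b ≤ lamr b p := by linarith
  have hlg_nonneg : 0 ≤ lamg a p := by
    refine tsum_nonneg (fun n => ?_)
    split_ifs; exacts [hpos n, le_refl 0]
  have hlg_summ : Summable (fun ℓ : ℕ => if a + 1 ≤ ℓ then p ℓ else 0) := by
    refine Summable.of_nonneg_of_le (fun n => ?_) (fun n => ?_) hps
    · split_ifs; exacts [hpos n, le_refl 0]
    · split_ifs; exacts [le_refl _, hpos n]
  have hlg_le : lamg a p ≤ 1 := by
    rw [lamg, ← htsp]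
    refine Summable.tsum_le_tsum (fun n => ?_) hlg_summ hps
    split_ifs; exacts [le_refl _, hpos n]
  -- A = T - C with C = ∑_{m ≤ a} q m
  set C : ℝ := ∑ n ∈ Finset.range (a+1), q n with hC
  have hCsupp : ∀ n ∉ Finset.range (a+1), (if n < a + 1 then q n else 0) = 0 := by
    intro n hn; simp only [Finset.mem_range] at hn; rw [if_neg (by omega)]
  have hCsum : Summable (fun n => if n < a + 1 then q n else 0) :=
    summable_of_ne_finset_zero hCsupp
  have hAC : C + A = T := by
    have h3 : (∑' n, if n < a + 1 then q n else 0) = C := by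
      rw [tsum_eq_sum hCsupp, hC]
      refine Finset.sum_congr rfl (fun i hi => ?_)
      simp only [Finset.mem_range] at hi
      rw [if_pos hi]
    calc C + A = ∑' n, ((if n < a + 1 then q n else 0) + g2 n) := by
          rw [Summable.tsum_add hCsum hg2s, h3]
      _ = T := by
          refine tsum_congr (fun n => ?_)
          simp only [hg2]
          split_ifs with h h' h' <;> first | omega | simp
  -- bounds
  have hTnn : 0 ≤ T := tsum_nonneg hqnn
  have hBnn : 0 ≤ B := Finset.sum_nonneg (fun i _ => hqnn i)
  have hCnn : 0 ≤ C := Finset.sum_nonneg (fun i _ => hqnn i)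
  have hBle : B ≤ K ^ b := by
    calc B ≤ ∑ n ∈ Finset.range b, K ^ b * p n := by
          refine Finset.sum_le_sum (fun i hi => ?_)
          simp only [Finset.mem_range] at hi
          exact mul_le_mul_of_nonneg_right (pow_le_pow_right₀ hK.le (by omega)) (hpos i)
      _ = K ^ b * lamr b p := by rw [lamr, Finset.mul_sum]
      _ ≤ K ^ b * 1 := mul_le_mul_of_nonneg_left hlr_le (pow_nonneg hK0.le b)
      _ = K ^ b := mul_one _
  have hsum_le_one : ∑ n ∈ Finset.range (a+1), p n ≤ 1 := by
    rw [← htsp]; exact Summable.sum_le_tsum _ (fun n _ => hpos n) hps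
  have hCle : C ≤ K ^ a := by
    calc C ≤ ∑ n ∈ Finset.range (a+1), K ^ a * p n := by
          refine Finset.sum_le_sum (fun i hi => ?_)
          simp only [Finset.mem_range] at hi
          exact mul_le_mul_of_nonneg_right (pow_le_pow_right₀ hK.le (by omega)) (hpos i)
      _ = K ^ a * ∑ n ∈ Finset.range (a+1), p n := by rw [Finset.mul_sum]
      _ ≤ K ^ a * 1 := mul_le_mul_of_nonneg_left hsum_le_one (pow_nonneg hK0.le a)
      _ = K ^ a := mul_one _
  refine ⟨hLsum, ?_⟩
  rw [hLval]
  have hKinv : K⁻¹ = 1 / K := (one_div K).symm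
  have hc0 : 0 ≤ 1 - 1/K := by
    have : 1/K < 1 := by rw [div_lt_one hK0]; exact hK
    linarith
  -- first piece
  have h1 : lamg a p * (K * B - B) ≤ (K - 1) * K ^ b := by
    have hx : 0 ≤ (K - 1) * B := mul_nonneg (by linarith) hBnn
    have p1 : lamg a p * ((K - 1) * B) ≤ (K - 1) * B :=
      mul_le_of_le_one_left hx hlg_le
    have p2 : (K - 1) * B ≤ (K - 1) * K ^ b :=
      mul_le_mul_of_nonneg_left hBle (by linarith)
    calc lamg a p * (K * B - B) = lamg a p * ((K - 1) * B) := by ring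
      _ ≤ (K - 1) * B := p1
      _ ≤ (K - 1) * K ^ b := p2
  -- second piece
  have h2 : lamr b p * (K⁻¹ * A - A)
      ≤ (1 - 1/K) * K ^ a - (1 - (μ:ℝ)/b) * (1 - 1/K) * T := by
    have hAeq : A = T - C := by linarith
    have p1 : lamr b p * C ≤ K ^ a := by
      calc lamr b p * C ≤ 1 * K ^ a :=
            mul_le_mul hlr_le hCle hCnn zero_le_one
        _ = K ^ a := one_mul _
    have p2 : ((1 - (μ:ℝ)/b) - lamr b p) * ((1 - 1/K) * T) ≤ 0 :=
      mul_nonpos_of_nonpos_of_nonneg (by linarith) (mul_nonneg hc0 hTnn)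
    have hexp : lamr b p * (K⁻¹ * A - A)
        = -(lamr b p * ((1 - 1/K) * A)) := by
      rw [hKinv]; ring
    rw [hexp, hAeq]
    nlinarith [mul_nonneg hc0 (mul_nonneg hlr_nonneg hCnn)]
  linarith
end

section
/- Let a, b, μ be natural numbers with a < μ < b, and let p ∈ V_μ. Then the following two identities hold: (i) ∑_{n=0}^{a−1} (a−n)·L[p]_n = −λ_g(p) · ∑_{n=0}^{a−1} p_n; (ii) the series ∑_{n=b+1}^{∞} n·L[p]_n converges and ∑_{n=b+1}^{∞} n·L[p]_n = −λ_r(p) · ( ∑_{n=b+1}^{∞} p_n + b·p_{b+1} ). In particular both quantities are nonpositive. -/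
open scoped BigOperators

lemma tail_hasSum {g : ℕ → ℝ} {S : ℝ} (m : ℕ) (h : HasSum g S) :
    HasSum (fun n => if m ≤ n then g n else 0) (S - ∑ n ∈ Finset.range m, g n) := by
  have h2 : HasSum (fun n => if n < m then g n else 0)
      (∑ n ∈ Finset.range m, if n < m then g n else 0) :=
    hasSum_sum_of_ne_finset_zero (by
      intro n hn
      simp only [Finset.mem_range, not_lt] at hn
      simp [Nat.not_lt.mpr hn])
  have h1 : HasSum (fun n => if n < m then g n else 0) (∑ n ∈ Finset.range m, g n) := by
    have : (∑ n ∈ Finset.range m, if n < m then g n else 0) = ∑ n ∈ Finset.range m, g n :=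
      Finset.sum_congr rfl fun n hn => by simp [Finset.mem_range.mp hn]
    rwa [this] at h2
  have h3 := h.sub h1
  convert h3 using 1
  rfl
  funext n
  by_cases hn : m ≤ n
  · simp [hn, Nat.not_lt.mpr hn]
  · simp [hn, Nat.lt_of_not_le hn]

lemma swap_sum (x : ℕ → ℝ) (a : ℕ) :
    ∑ n ∈ Finset.range a, ((a : ℝ) - n) * x n
      = ∑ k ∈ Finset.range a, ∑ n ∈ Finset.range (k + 1), x n := by
  induction a with
  | zero => simp
  | succ a ih =>
    push_cast
    calc ∑ n ∈ Finset.range (a + 1), ((a : ℝ) + 1 - n) * x n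
        = ∑ n ∈ Finset.range (a + 1), (((a : ℝ) - n) * x n + x n) := by
          apply Finset.sum_congr rfl; intro n _; ring
      _ = ∑ n ∈ Finset.range (a + 1), ((a : ℝ) - n) * x n
            + ∑ n ∈ Finset.range (a + 1), x n := Finset.sum_add_distrib
      _ = ∑ n ∈ Finset.range a, ((a : ℝ) - n) * x n + ∑ n ∈ Finset.range (a + 1), x n := by
          rw [Finset.sum_range_succ (f := fun n => ((a : ℝ) - n) * x n)]
          simp only [sub_self, zero_mul, add_zero]
      _ = ∑ k ∈ Finset.range (a + 1), ∑ n ∈ Finset.range (k + 1), x n := by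
          rw [ih, Finset.sum_range_succ (f := fun k => ∑ n ∈ Finset.range (k + 1), x n)]

lemma tele (p : ℕ → ℝ) (k : ℕ) :
    ∑ n ∈ Finset.range (k + 1), ((if 1 ≤ n then p (n - 1) else 0) - p n) = -p k := by
  induction k with
  | zero => simp
  | succ k ih =>
    rw [Finset.sum_range_succ, ih]
    simp
    ring

theorem weighted_sums_of_L (a b μ : ℕ) (hau : a < μ) (hub : μ < b)
    (p : ℕ → ℝ) (hp : memV μ p) :
    (∑ n ∈ Finset.range a, ((a : ℝ) - n) * Lop a b p n
        = -(lamg a p) * ∑ n ∈ Finset.range a, p n) ∧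
      HasSum (fun n : ℕ => if b + 1 ≤ n then (n : ℝ) * Lop a b p n else 0)
        (-(lamr b p) * (tailSum (b + 1) p + (b : ℝ) * p (b + 1))) ∧
      (∑ n ∈ Finset.range a, ((a : ℝ) - n) * Lop a b p n ≤ 0) ∧
      (-(lamr b p) * (tailSum (b + 1) p + (b : ℝ) * p (b + 1)) ≤ 0) := by
  obtain ⟨hpos, hsum1, hsumμ⟩ := hp
  have hab : a < b := hau.trans hub
  -- nonnegativity facts
  have hlamg : 0 ≤ lamg a p := tsum_nonneg fun n => by
    by_cases h : a + 1 ≤ n <;> simp [h, hpos n]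
  have hlamr : 0 ≤ lamr b p := Finset.sum_nonneg fun n _ => hpos n
  have htail : 0 ≤ tailSum (b + 1) p := tsum_nonneg fun n => by
    by_cases h : b + 1 ≤ n <;> simp [h, hpos n]
  -- Part (i)
  have part1 : ∑ n ∈ Finset.range a, ((a : ℝ) - n) * Lop a b p n
      = -(lamg a p) * ∑ n ∈ Finset.range a, p n := by
    have hL : ∀ n ∈ Finset.range a, ((a : ℝ) - n) * Lop a b p n
        = lamg a p * (((a : ℝ) - n) * ((if 1 ≤ n then p (n - 1) else 0) - p n)) := by
      intro n hn
      have hn' : n < a := Finset.mem_range.mp hn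
      have h1 : ¬ a ≤ n := by omega
      have h2 : ¬ a + 1 ≤ n := by omega
      have h3 : n ≤ b := by omega
      have h4 : n ≤ b - 1 := by omega
      simp only [Lop, h1, h2, h3, h4, if_false, if_true, and_true]
      by_cases h5 : 1 ≤ n <;> simp [h5] <;> ring
    rw [Finset.sum_congr rfl hL, ← Finset.mul_sum,
      swap_sum (fun n => (if 1 ≤ n then p (n - 1) else 0) - p n) a]
    have : ∑ k ∈ Finset.range a,
        ∑ n ∈ Finset.range (k + 1), ((if 1 ≤ n then p (n - 1) else 0) - p n)
        = -∑ n ∈ Finset.range a, p n := by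
      rw [← Finset.sum_neg_distrib]
      exact Finset.sum_congr rfl fun k _ => tele p k
    rw [this]; ring
  -- Part (ii)
  have hF1 : HasSum (fun n : ℕ => ((n : ℝ) + 1) * p (n + 1)) (μ : ℝ) := by
    have := (hasSum_nat_add_iff (f := fun n : ℕ => (n : ℝ) * p n) 1).mpr
      (by simpa using hsumμ)
    convert this using 2 with n
    rfl
    push_cast; ring
  have hD0 : HasSum (fun n : ℕ => p (n + 1)) (1 - p 0) := by
    refine (hasSum_nat_add_iff (f := p) (g := 1 - p 0) 1).mpr ?_
    simpa using hsum1
  have hC := tail_hasSum (b + 1) hF1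
  have hD := tail_hasSum (b + 1) hD0
  have hB := tail_hasSum (b + 1) hsumμ
  have htailval : tailSum (b + 1) p = 1 - ∑ n ∈ Finset.range (b + 1), p n :=
    (tail_hasSum (b + 1) hsum1).tsum_eq
  have hS1 : ∑ n ∈ Finset.range (b + 1), ((n : ℝ) + 1) * p (n + 1)
      = ∑ n ∈ Finset.range (b + 1), (n : ℝ) * p n + ((b : ℝ) + 1) * p (b + 1) := by
    have := Finset.sum_range_succ' (fun n : ℕ => (n : ℝ) * p n) (b + 1)
    have h2 := Finset.sum_range_succ (fun n : ℕ => (n : ℝ) * p n) (b + 1)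
    push_cast at this h2 ⊢
    linarith
  have hS2 : ∑ n ∈ Finset.range (b + 1), p (n + 1)
      = ∑ n ∈ Finset.range (b + 1), p n + p (b + 1) - p 0 := by
    have := Finset.sum_range_succ' p (b + 1)
    have h2 := Finset.sum_range_succ p (b + 1)
    linarith
  have hcomb := (hC.sub hD).sub hB
  have hkey : HasSum (fun n : ℕ => if b + 1 ≤ n then (n : ℝ) * (p (n + 1) - p n) else 0)
      (-(tailSum (b + 1) p + (b : ℝ) * p (b + 1))) := by
    convert hcomb using 1
    · rfl
    · funext n
      by_cases hn : b + 1 ≤ n <;> simp [hn] <;> ring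
    · rw [htailval, hS1, hS2]; ring
  have part2 : HasSum (fun n : ℕ => if b + 1 ≤ n then (n : ℝ) * Lop a b p n else 0)
      (-(lamr b p) * (tailSum (b + 1) p + (b : ℝ) * p (b + 1))) := by
    have := hkey.mul_left (lamr b p)
    convert this using 1
    · rfl
    · funext n
      by_cases hn : b + 1 ≤ n
      · have h1 : a ≤ n := by omega
        have h2 : a + 1 ≤ n := by omega
        have h3 : ¬ n ≤ b := by omega
        have h4 : ¬ n ≤ b - 1 := by omega
        simp only [hn, if_true, Lop, h1, h2, h3, h4, if_false, if_true, and_false]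
        ring
      · simp [hn]
    · ring
  refine ⟨part1, part2, ?_, ?_⟩
  · rw [part1]
    have : 0 ≤ lamg a p * ∑ n ∈ Finset.range a, p n :=
      mul_nonneg hlamg (Finset.sum_nonneg fun n _ => hpos n)
    linarith
  · have : 0 ≤ lamr b p * (tailSum (b + 1) p + (b : ℝ) * p (b + 1)) :=
      mul_nonneg hlamr (add_nonneg htail (mul_nonneg (Nat.cast_nonneg b) (hpos (b + 1))))
    linarith
end

section
/- Let a, b, μ be natural numbers with a < μ < b, and let p ∈ V_μ satisfy p_n > 0 for all a ≤ n ≤ b and C₀ := ∑_{n≥0} 2ⁿ·p_n < ∞. Let k₁, k₂ be real numbers with k₁ ≥ −log(1 − μ/b) and k₂ ≥ log C₀. Then the generalized entropy production is nonpositive: ∑_{n=a}^{b} L[p]_n·log p_n + k₁·∑_{n=b+1}^{∞} n·L[p]_n + k₂·∑_{n=0}^{a−1} (a−n)·L[p]_n ≤ 0. (Along a solution t ↦ p(t) of the mean-field ODE system p′_n = L[p]_n, the left-hand side equals the time derivative of the generalized Boltzmann entropy H̃_ab[p] = ∑_{n=0}^{a−1} p_n + ∑_{n=a}^{b} p_n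 log p_n + ∑_{n=b+1}^{∞} p_n + k₁·∑_{n=b+1}^{∞} n·p_n + k₂·∑_{n=0}^{a−1} (a−n)·p_n.) -/
open scoped BigOperators

/- ### Auxiliary lemmas -/

private lemma summable_ite_tail {f : ℕ → ℝ} (hf : Summable f) (m : ℕ) :
    Summable (fun n => if m ≤ n then f n else 0) := by
  have := hf.indicator {n | m ≤ n}
  convert this using 2 with n
  case e'_3 => rfl
  simp [Set.indicator_apply]

private lemma tsum_ite_tail {f : ℕ → ℝ} (hf : Summable f) (m : ℕ) :
    ∑' n, (if m ≤ n then f n else 0) = (∑' n, f n) - ∑ n ∈ Finset.range m, f n := by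
  have h1 : ∀ n, (if m ≤ n then f n else 0) = f n - (if n < m then f n else 0) := by
    intro n
    by_cases h : m ≤ n
    · simp [h, Nat.not_lt.mpr h]
    · simp [h, Nat.lt_of_not_le h]
  have hsupp : Summable (fun n => if n < m then f n else 0) := by
    apply summable_of_ne_finset_zero (s := Finset.range m)
    intro n hn
    simp only [Finset.mem_range] at hn
    simp [Nat.not_lt.mpr (Nat.not_lt.mp hn)]
  have h2 : ∑' n, (if n < m then f n else 0) = ∑ n ∈ Finset.range m, f n := by
    rw [tsum_eq_sum (s := Finset.range m)]
    · exact Finset.sum_congr rfl (fun n hn => by simp [Finset.mem_range.mp hn])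
    · intro n hn
      simp only [Finset.mem_range] at hn
      simp [Nat.not_lt.mpr (Nat.not_lt.mp hn)]
  calc ∑' n, (if m ≤ n then f n else 0) = ∑' n, (f n - (if n < m then f n else 0)) :=
        tsum_congr h1
    _ = (∑' n, f n) - ∑' n, (if n < m then f n else 0) := Summable.tsum_sub hf hsupp
    _ = (∑' n, f n) - ∑ n ∈ Finset.range m, f n := by rw [h2]

private lemma cubic_le_exp {t : ℝ} (ht : 1 ≤ t) : t^2 - t + 1 ≤ Real.exp (t * Real.log 2) := by
  set L := Real.log 2 with hLdef
  have hL1 : (0.6931:ℝ) ≤ L := by have := Real.log_two_gt_d9; linarith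
  have hL2 : L ≤ (0.6932:ℝ) := by have := Real.log_two_lt_d9; linarith
  set s := t - 1 with hs'
  have hs : 0 ≤ s := by linarith
  have h1 : Real.exp (t * L) = 2 * Real.exp (s * L) := by
    rw [show t * L = L + s * L by rw [hs']; ring, Real.exp_add, Real.exp_log two_pos]
  have h2 : 1 + s*L + (s*L)^2/2 + (s*L)^3/6 ≤ Real.exp (s*L) := by
    have h := Real.sum_le_exp_of_nonneg (mul_nonneg hs (by linarith : (0:ℝ) ≤ L)) 4
    rw [Finset.sum_range_succ, Finset.sum_range_succ, Finset.sum_range_succ,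
      Finset.sum_range_one] at h
    norm_num [Nat.factorial] at h
    linarith
  have hLsq : (0.4803:ℝ) ≤ L^2 := by nlinarith
  have hLcube : (0.3329:ℝ) ≤ L^3 := by nlinarith
  have hq : (0.4803:ℝ) * s^2 ≤ (s*L)^2 := by
    have := mul_le_mul_of_nonneg_left hLsq (sq_nonneg s)
    rw [mul_pow]; linarith
  have hc : (0.3329:ℝ) * s^3 ≤ (s*L)^3 := by
    have := mul_le_mul_of_nonneg_left hLcube (pow_nonneg hs 3)
    rw [mul_pow]; linarith
  have hlin : (0.6931:ℝ) * s ≤ s * L := by nlinarith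
  rw [h1]
  have key : t^2 - t + 1 ≤ 2 * (1 + s*L + (s*L)^2/2 + (s*L)^3/6) := by
    have ht2 : t = s + 1 := by linarith
    rw [ht2]
    nlinarith [mul_nonneg hs (sq_nonneg (s - 27/10)), sq_nonneg (s - 53/20)]
  linarith

/-- Key analytic estimate: `1 ≤ λg * C₀`. -/
private lemma one_le_lamg_mul_C0 (a μ : ℕ) (p : ℕ → ℝ) (hnn : ∀ n, 0 ≤ p n)
    (h1 : HasSum p 1) (hμ : HasSum (fun n : ℕ => (n : ℝ) * p n) (μ : ℝ))
    (hau : a < μ) (hC0 : Summable (fun n : ℕ => (2 : ℝ) ^ n * p n))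
    (d : ℝ) (hd_def : d = ∑' ℓ : ℕ, if a + 1 ≤ ℓ then p ℓ else 0) (hd : 0 < d) :
    1 ≤ d * ∑' n : ℕ, (2:ℝ) ^ n * p n := by
  have hps : Summable p := h1.summable
  have hnps : Summable (fun n : ℕ => (n:ℝ) * p n) := hμ.summable
  set C0 := ∑' n : ℕ, (2:ℝ) ^ n * p n with hC0def
  set P := ∑ n ∈ Finset.range (a+1), p n with hPdef
  have hdP : d = 1 - P := by rw [hd_def, tsum_ite_tail hps, h1.tsum_eq]
  have hP0 : 0 ≤ P := Finset.sum_nonneg fun n _ => hnn n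
  have hd1 : d ≤ 1 := by rw [hdP]; linarith
  set M := ∑' n : ℕ, (if a + 1 ≤ n then (n:ℝ) * p n else 0) with hMdef
  have hMeq : M = μ - ∑ n ∈ Finset.range (a+1), (n:ℝ) * p n := by
    rw [hMdef, tsum_ite_tail hnps, hμ.tsum_eq]
  have hM1 : 1 ≤ M := by
    have hb : ∑ n ∈ Finset.range (a+1), (n:ℝ) * p n ≤ (a:ℝ) * P := by
      rw [hPdef, Finset.mul_sum]
      refine Finset.sum_le_sum fun n hn => ?_
      have hna : (n:ℝ) ≤ a := by
        exact_mod_cast Nat.lt_succ_iff.mp (Finset.mem_range.mp hn)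
      exact mul_le_mul_of_nonneg_right hna (hnn n)
    have haμ : (a:ℝ) + 1 ≤ (μ:ℝ) := by exact_mod_cast hau
    have : (a:ℝ) * P ≤ a := by
      nlinarith [Nat.cast_nonneg (α := ℝ) a]
    rw [hMeq]; linarith
  set L := Real.log 2 with hL
  have hLpos : 0 < L := Real.log_pos one_lt_two
  set c₀ := M / d with hc₀def
  have hc₀d : c₀ * d = M := div_mul_cancel₀ M hd.ne'
  have hc₀ : 1 / d ≤ c₀ := by
    rw [hc₀def]
    exact (div_le_div_iff_of_pos_right hd).mpr hM1
  set Ct := ∑' n : ℕ, (if a + 1 ≤ n then (2:ℝ)^n * p n else 0) with hCtdef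
  have hCteq : Ct = C0 - ∑ n ∈ Finset.range (a+1), (2:ℝ)^n * p n := by
    rw [hCtdef, tsum_ite_tail hC0]
  have hC0PCt : P + Ct ≤ C0 := by
    have : P ≤ ∑ n ∈ Finset.range (a+1), (2:ℝ)^n * p n := by
      refine Finset.sum_le_sum fun n _ => ?_
      have h2 : (1:ℝ) ≤ 2^n := one_le_pow₀ one_le_two
      nlinarith [hnn n]
    linarith [hCteq]
  have hpoint : ∀ n : ℕ, (if a + 1 ≤ n then Real.exp (c₀*L) * (1 + ((n:ℝ) - c₀)*L) * p n else 0)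
      ≤ (if a + 1 ≤ n then (2:ℝ)^n * p n else 0) := by
    intro n
    by_cases h : a + 1 ≤ n
    · simp only [if_pos h]
      have h2n : (2:ℝ)^n = Real.exp ((n:ℝ) * L) := by
        rw [hL, Real.exp_nat_mul, Real.exp_log two_pos]
      have hexp : Real.exp (c₀*L) * (1 + ((n:ℝ) - c₀)*L) ≤ (2:ℝ)^n := by
        rw [h2n]
        have h3 := Real.add_one_le_exp (((n:ℝ) - c₀)*L)
        calc Real.exp (c₀*L) * (1 + ((n:ℝ) - c₀)*L)
            ≤ Real.exp (c₀*L) * Real.exp (((n:ℝ) - c₀)*L) :=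
              mul_le_mul_of_nonneg_left (by linarith) (Real.exp_pos _).le
          _ = Real.exp ((n:ℝ) * L) := by rw [← Real.exp_add]; ring_nf
      exact mul_le_mul_of_nonneg_right hexp (hnn n)
    · simp [h]
  have hliheq : ∀ n : ℕ, (if a + 1 ≤ n then Real.exp (c₀*L) * (1 + ((n:ℝ) - c₀)*L) * p n else 0)
      = Real.exp (c₀*L) * (1 - c₀*L) * (if a + 1 ≤ n then p n else 0)
        + Real.exp (c₀*L) * L * (if a + 1 ≤ n then (n:ℝ) * p n else 0) := by
    intro n
    by_cases h : a + 1 ≤ n <;> simp [h] <;> ring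
  have hsuml : Summable (fun n : ℕ =>
      (if a + 1 ≤ n then Real.exp (c₀*L) * (1 + ((n:ℝ) - c₀)*L) * p n else 0)) := by
    rw [show (fun n : ℕ => (if a + 1 ≤ n then Real.exp (c₀*L) * (1 + ((n:ℝ) - c₀)*L) * p n else 0))
      = fun n => Real.exp (c₀*L) * (1 - c₀*L) * (if a + 1 ≤ n then p n else 0)
        + Real.exp (c₀*L) * L * (if a + 1 ≤ n then (n:ℝ) * p n else 0) from funext hliheq]
    exact (((summable_ite_tail hps (a+1)).mul_left _).add
      ((summable_ite_tail hnps (a+1)).mul_left _))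
  have htsum_l : ∑' n : ℕ, (if a + 1 ≤ n then Real.exp (c₀*L) * (1 + ((n:ℝ) - c₀)*L) * p n else 0)
      = Real.exp (c₀*L) * d := by
    rw [tsum_congr hliheq, Summable.tsum_add ((summable_ite_tail hps (a+1)).mul_left _)
      ((summable_ite_tail hnps (a+1)).mul_left _), tsum_mul_left, tsum_mul_left, ← hd_def, ← hMdef]
    have h9 : c₀ * L * d = L * M := by rw [← hc₀d]; ring
    linear_combination (-Real.exp (c₀ * L)) * h9
  have hCt_ge : Real.exp (c₀*L) * d ≤ Ct := by
    rw [← htsum_l, hCtdef]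
    exact Summable.tsum_le_tsum hpoint hsuml (summable_ite_tail hC0 (a+1))
  have hexp_mono : Real.exp ((1/d)*L) ≤ Real.exp (c₀*L) :=
    Real.exp_le_exp.mpr (mul_le_mul_of_nonneg_right hc₀ hLpos.le)
  have ht1 : 1 ≤ 1/d := by rw [le_div_iff₀ hd]; linarith
  have hE := cubic_le_exp ht1
  have hfin : 1 - d + d^2 ≤ d^2 * Real.exp ((1/d)*L) := by
    have h8 := mul_le_mul_of_nonneg_left hE (sq_nonneg d)
    have hid : d^2 * ((1/d)^2 - (1/d) + 1) = 1 - d + d^2 := by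
      field_simp
    rw [hid] at h8
    exact h8
  have hchain : d * C0 ≥ d * (P + Ct) := by nlinarith [hC0PCt, hd.le]
  have hCt2 : d * Ct ≥ d^2 * Real.exp ((1/d)*L) := by
    have e1 : d * (Real.exp (c₀*L) * d) ≤ d * Ct := mul_le_mul_of_nonneg_left hCt_ge hd.le
    have e2 : d^2 * Real.exp ((1/d)*L) ≤ d^2 * Real.exp (c₀*L) :=
      mul_le_mul_of_nonneg_left hexp_mono (sq_nonneg d)
    have e3 : d * (Real.exp (c₀*L) * d) = d^2 * Real.exp (c₀*L) := by ring
    linarith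
  have hPd : d * P = d * (1 - d) := by rw [hdP]; ring
  nlinarith [hchain, hCt2, hfin, hPd, sq_nonneg (1-d),
    mul_nonneg (sub_nonneg.mpr hd1) (sq_nonneg d)]

private lemma final_assembly (S1 S2 S3 K k₁ k₂ c d A T Q pb1 logpb IF bR : ℝ)
    (hS1le : S1 ≤ (d*A - c*T)*K + c*pb1*logpb + IF)
    (hS2 : S2 = c * (-((bR+1) * pb1) - Q))
    (hS3 : S3 = -(d*A))
    (hTQ : T = pb1 + Q)
    (hk1' : -K ≤ k₁) (hk2' : K ≤ k₂)
    (hk1pos : 0 ≤ k₁) (hc : 0 ≤ c) (hd : 0 ≤ d) (hA : 0 ≤ A) (hT : 0 ≤ T)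
    (hpb1 : 0 ≤ pb1) (hbR : 0 ≤ bR) (ht4 : c*pb1*logpb ≤ 0) (hIF : IF ≤ 0) :
    S1 + k₁ * S2 + k₂ * S3 ≤ 0 := by
  have f1 : (d*A)*K ≤ (d*A)*k₂ := mul_le_mul_of_nonneg_left hk2' (mul_nonneg hd hA)
  have f2 : (c*T)*(-K) ≤ (c*T)*k₁ := mul_le_mul_of_nonneg_left hk1' (mul_nonneg hc hT)
  have f3 : 0 ≤ k₁*c*bR*pb1 :=
    mul_nonneg (mul_nonneg (mul_nonneg hk1pos hc) hbR) hpb1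
  have f4 : k₁*c*T = k₁*c*pb1 + k₁*c*Q := by rw [hTQ]; ring
  nlinarith [f1, f2, f3, f4, hS1le]

private lemma shift_sum_aux (m k : ℕ) (g : ℕ → ℝ) :
    ∑ n ∈ Finset.Ico (m+1) (k+1), g n = ∑ n ∈ Finset.Ico m k, g (n+1) := by
  rw [Finset.sum_Ico_eq_sum_range, Finset.sum_Ico_eq_sum_range, Nat.succ_sub_succ]
  exact Finset.sum_congr rfl (fun i _ => by rw [Nat.add_right_comm])

private lemma sum_ite_sub_aux (s t : Finset ℕ) (h : t ⊆ s) (P : ℕ → Prop) [DecidablePred P]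
    (g : ℕ → ℝ) (h1 : ∀ n ∈ t, P n) (h2 : ∀ n ∈ s, n ∉ t → ¬ P n) :
    ∑ n ∈ s, (if P n then g n else 0) = ∑ n ∈ t, g n := by
  rw [← Finset.sum_subset h (fun x hx hxt => if_neg (h2 x hx hxt))]
  exact Finset.sum_congr rfl fun n hn => if_pos (h1 n hn)

private lemma middle_identity (a b : ℕ) (hab : a < b) (c d : ℝ) (p f : ℕ → ℝ) :
    ∑ n ∈ Finset.Icc a b, (c * ((if a ≤ n then p (n+1) else 0) - (if a+1 ≤ n then p n else 0))
      + d * ((if 1 ≤ n ∧ n ≤ b then p (n-1) else 0) - (if n ≤ b-1 then p n else 0))) * f n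
    = ∑ n ∈ Finset.Ico a b, (c * p (n+1) - d * p n) * (f n - f (n+1))
      + c * p (b+1) * f b + (if 1 ≤ a then d * p (a-1) * f a else 0) := by
  have hIcc : Finset.Icc a b = Finset.Ico a (b+1) := (Finset.Ico_add_one_right_eq_Icc a b).symm
  have hSX : ∑ n ∈ Finset.Icc a b, (if a ≤ n then p (n+1) * f n else 0)
      = ∑ n ∈ Finset.Ico a b, p (n+1) * f n + p (b+1) * f b := by
    rw [Finset.sum_congr rfl (fun n hn => by
      rw [if_pos (Finset.mem_Icc.mp hn).1]), hIcc, Finset.sum_Ico_succ_top hab.le]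
  have hSY : ∑ n ∈ Finset.Icc a b, (if a+1 ≤ n then p n * f n else 0)
      = ∑ n ∈ Finset.Ico a b, p (n+1) * f (n+1) := by
    rw [sum_ite_sub_aux (Finset.Icc a b) (Finset.Icc (a+1) b)
      (Finset.Icc_subset_Icc_left (by omega)) _ _
      (fun n hn => (Finset.mem_Icc.mp hn).1)
      (fun n hn hnt => by simp only [Finset.mem_Icc] at hn hnt; omega)]
    rw [show Finset.Icc (a+1) b = Finset.Ico (a+1) (b+1) from (Finset.Ico_add_one_right_eq_Icc _ _).symm,
      shift_sum_aux]
  have hSW : ∑ n ∈ Finset.Icc a b, (if n ≤ b-1 then p n * f n else 0)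
      = ∑ n ∈ Finset.Ico a b, p n * f n := by
    refine sum_ite_sub_aux _ _ ?_ _ _ ?_ ?_
    · rw [hIcc]; exact Finset.Ico_subset_Ico_right (by omega)
    · intro n hn; have := Finset.mem_Ico.mp hn; omega
    · intro n hn hnt; rw [hIcc] at hn
      have h1 := Finset.mem_Ico.mp hn
      have : ¬ n < b := fun hc => hnt (Finset.mem_Ico.mpr ⟨h1.1, hc⟩)
      omega
  have hSZ : ∑ n ∈ Finset.Icc a b, (if 1 ≤ n ∧ n ≤ b then p (n-1) * f n else 0)
      = (if 1 ≤ a then p (a-1) * f a else 0) + ∑ n ∈ Finset.Ico a b, p n * f (n+1) := by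
    have amax : max a 1 - 1 + 1 = max a 1 := by omega
    rw [sum_ite_sub_aux (Finset.Icc a b) (Finset.Icc (max a 1) b)
      (Finset.Icc_subset_Icc_left (by omega)) _ _
      (fun n hn => by have := Finset.mem_Icc.mp hn; omega)
      (fun n hn hnt => by simp only [Finset.mem_Icc] at hn hnt; omega)]
    rw [show Finset.Icc (max a 1) b = Finset.Ico (max a 1 - 1 + 1) (b+1) from by
      rw [amax]; exact (Finset.Ico_add_one_right_eq_Icc _ _).symm, shift_sum_aux]
    have hbody : ∀ n, p (n + 1 - 1) * f (n+1) = p n * f (n+1) := fun n => by simp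
    rw [Finset.sum_congr rfl (fun n _ => hbody n)]
    by_cases ha : 1 ≤ a
    · rw [if_pos ha, show max a 1 - 1 = a - 1 from by omega,
        Finset.sum_eq_sum_Ico_succ_bot (show a - 1 < b by omega),
        show a - 1 + 1 = a from by omega]
    · rw [if_neg ha, show max a 1 - 1 = a from by omega, zero_add]
  calc ∑ n ∈ Finset.Icc a b, (c * ((if a ≤ n then p (n+1) else 0) - (if a+1 ≤ n then p n else 0))
      + d * ((if 1 ≤ n ∧ n ≤ b then p (n-1) else 0) - (if n ≤ b-1 then p n else 0))) * f n
      = ∑ n ∈ Finset.Icc a b, (c * (if a ≤ n then p (n+1) * f n else 0)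
          - c * (if a+1 ≤ n then p n * f n else 0)
          + (d * (if 1 ≤ n ∧ n ≤ b then p (n-1) * f n else 0)
          - d * (if n ≤ b-1 then p n * f n else 0))) := by
        refine Finset.sum_congr rfl (fun n _ => by split_ifs <;> ring)
    _ = c * (∑ n ∈ Finset.Icc a b, (if a ≤ n then p (n+1) * f n else 0))
        - c * (∑ n ∈ Finset.Icc a b, (if a+1 ≤ n then p n * f n else 0))
        + (d * (∑ n ∈ Finset.Icc a b, (if 1 ≤ n ∧ n ≤ b then p (n-1) * f n else 0))
        - d * (∑ n ∈ Finset.Icc a b, (if n ≤ b-1 then p n * f n else 0))) := by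
        rw [Finset.sum_add_distrib, Finset.sum_sub_distrib, Finset.sum_sub_distrib,
          ← Finset.mul_sum, ← Finset.mul_sum, ← Finset.mul_sum, ← Finset.mul_sum]
    _ = _ := by
        rw [hSX, hSY, hSW, hSZ]
        have : ∑ n ∈ Finset.Ico a b, (c * p (n+1) - d * p n) * (f n - f (n+1))
            = c * ∑ n ∈ Finset.Ico a b, p (n+1) * f n
              - c * ∑ n ∈ Finset.Ico a b, p (n+1) * f (n+1)
              + (d * ∑ n ∈ Finset.Ico a b, p n * f (n+1)
              - d * ∑ n ∈ Finset.Ico a b, p n * f n) := by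
          rw [Finset.mul_sum, Finset.mul_sum, Finset.mul_sum, Finset.mul_sum]
          rw [← Finset.sum_sub_distrib, ← Finset.sum_sub_distrib, ← Finset.sum_add_distrib]
          exact Finset.sum_congr rfl (fun n _ => by ring)
        rw [this]
        by_cases ha : 1 ≤ a
        · rw [if_pos ha, if_pos ha]; ring
        · rw [if_neg ha, if_neg ha]; ring

private lemma coeff_swap_aux (a : ℕ) (h : ℕ → ℝ) :
    ∑ n ∈ Finset.range a, ((a:ℝ) - n) * h n
      = ∑ k ∈ Finset.range a, ∑ n ∈ Finset.range (k+1), h n := by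
  induction a with
  | zero => simp
  | succ a ih =>
    calc ∑ n ∈ Finset.range (a+1), (((a+1:ℕ):ℝ) - n) * h n
        = ∑ n ∈ Finset.range (a+1), (((a:ℝ) - n) * h n + h n) := by
          refine Finset.sum_congr rfl fun n _ => ?_; push_cast; ring
      _ = (∑ n ∈ Finset.range (a+1), ((a:ℝ) - n) * h n) + ∑ n ∈ Finset.range (a+1), h n :=
          Finset.sum_add_distrib
      _ = (∑ n ∈ Finset.range a, ((a:ℝ) - n) * h n) + ∑ n ∈ Finset.range (a+1), h n := by
          rw [Finset.sum_range_succ (f := fun n => ((a:ℝ) - n) * h n)]; simp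
      _ = ∑ k ∈ Finset.range (a+1), ∑ n ∈ Finset.range (k+1), h n := by
          rw [ih, Finset.sum_range_succ (f := fun k => ∑ n ∈ Finset.range (k+1), h n)]

private lemma sumA_aux (a : ℕ) (p : ℕ → ℝ) :
    ∑ n ∈ Finset.range a, ((a:ℝ) - n) * ((if 1 ≤ n then p (n-1) else 0) - p n)
      = -∑ n ∈ Finset.range a, p n := by
  rw [coeff_swap_aux]
  have inner : ∀ k, ∑ n ∈ Finset.range (k+1), ((if 1 ≤ n then p (n-1) else 0) - p n)
      = -p k := by
    intro k
    rw [Finset.sum_sub_distrib]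
    have h1 : ∑ n ∈ Finset.range (k+1), (if 1 ≤ n then p (n-1) else 0)
        = ∑ n ∈ Finset.range k, p n := by
      rw [Finset.sum_range_succ']; simp
    rw [h1, Finset.sum_range_succ]; ring
  rw [Finset.sum_congr rfl fun k _ => inner k]
  simp

private lemma tail_Lop_sum (b : ℕ) (p : ℕ → ℝ) (hnn : ∀ n, 0 ≤ p n) (hps : Summable p)
    (hnps : Summable (fun n : ℕ => (n:ℝ) * p n)) :
    ∑' n : ℕ, (if b + 1 ≤ n then (n:ℝ) * (p (n+1) - p n) else 0)
      = -(((b:ℝ)+1) * p (b+1)) - ∑' n : ℕ, (if b + 2 ≤ n then p n else 0) := by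
  set G : ℕ → ℝ := fun m => if b + 2 ≤ m then ((m:ℝ)-1) * p m else 0 with hGdef
  have hGnn : ∀ m, 0 ≤ G m := by
    intro m
    simp only [hGdef]
    split_ifs with h
    · have h1 : (1:ℝ) ≤ (m:ℝ) := by exact_mod_cast (by omega : 1 ≤ m)
      exact mul_nonneg (by linarith) (hnn m)
    · exact le_refl 0
  have hGle : ∀ m, G m ≤ (m:ℝ) * p m := by
    intro m
    simp only [hGdef]
    split_ifs with h
    · nlinarith [hnn m]
    · exact mul_nonneg (Nat.cast_nonneg m) (hnn m)
  have hG : Summable G := Summable.of_nonneg_of_le hGnn hGle hnps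
  have hF₁eq : (fun n => G (n+1)) = fun n => if b + 1 ≤ n then (n:ℝ) * p (n+1) else 0 := by
    funext n
    simp only [hGdef]
    by_cases h : b + 1 ≤ n
    · rw [if_pos (by omega : b + 2 ≤ n + 1), if_pos h]
      push_cast; ring
    · rw [if_neg (by omega : ¬ b + 2 ≤ n + 1), if_neg h]
  have hF₁ : Summable (fun n => if b + 1 ≤ n then (n:ℝ) * p (n+1) else 0) :=
    hF₁eq ▸ ((summable_nat_add_iff 1).mpr hG)
  have hF₂ : Summable (fun n => if b + 1 ≤ n then (n:ℝ) * p n else 0) :=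
    summable_ite_tail hnps (b+1)
  have hsplit : ∀ n : ℕ, (if b + 1 ≤ n then (n:ℝ) * (p (n+1) - p n) else 0)
      = (if b + 1 ≤ n then (n:ℝ) * p (n+1) else 0)
        - (if b + 1 ≤ n then (n:ℝ) * p n else 0) := by
    intro n; split_ifs <;> ring
  have hG0 : G 0 = 0 := by simp [hGdef]
  have hsum1 : ∑' n, (if b + 1 ≤ n then (n:ℝ) * p (n+1) else 0) = ∑' m, G m := by
    rw [← hF₁eq, Summable.tsum_eq_zero_add hG, hG0, zero_add]
  have hGsplit : ∀ m : ℕ, G m = (if b + 2 ≤ m then (m:ℝ) * p m else 0)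
      - (if b + 2 ≤ m then p m else 0) := by
    intro m; simp only [hGdef]; split_ifs <;> ring
  have hsumG : ∑' m, G m = (∑' m, (if b + 2 ≤ m then (m:ℝ) * p m else 0))
      - ∑' m, (if b + 2 ≤ m then p m else 0) := by
    rw [tsum_congr hGsplit]
    exact Summable.tsum_sub (summable_ite_tail hnps (b+2)) (summable_ite_tail hps (b+2))
  rw [tsum_congr hsplit, Summable.tsum_sub hF₁ hF₂, hsum1, hsumG,
    tsum_ite_tail hnps (b+2), tsum_ite_tail hnps (b+1), Finset.sum_range_succ (n := b+1)]
  push_cast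
  ring

open scoped BigOperators

set_option maxHeartbeats 1000000 in
theorem generalized_entropy_production_nonpositive (a b μ : ℕ)
    (hau : a < μ) (hub : μ < b) (p : ℕ → ℝ) (hp : memV μ p)
    (hpos : ∀ n, a ≤ n → n ≤ b → 0 < p n)
    (hC0 : Summable (fun n : ℕ => (2 : ℝ) ^ n * p n))
    (k₁ k₂ : ℝ) (hk₁ : -Real.log (1 - (μ : ℝ) / b) ≤ k₁)
    (hk₂ : Real.log (∑' n : ℕ, (2 : ℝ) ^ n * p n) ≤ k₂) :
    ∑ n ∈ Finset.Icc a b, Lop a b p n * Real.log (p n)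
        + k₁ * ∑' n : ℕ, (if b + 1 ≤ n then (n : ℝ) * Lop a b p n else 0)
        + k₂ * ∑ n ∈ Finset.range a, ((a : ℝ) - n) * Lop a b p n ≤ 0 := by
  obtain ⟨hnn, h1, hμ⟩ := hp
  have hps : Summable p := h1.summable
  have hnps : Summable (fun n : ℕ => (n:ℝ) * p n) := hμ.summable
  have hab : a < b := hau.trans hub
  have hb1 : 1 ≤ b := by omega
  set c := lamr b p with hc_def
  set d := lamg a p with hd_def
  have hc_eq : c = ∑ n ∈ Finset.range b, p n := rfl
  have hd_eq : d = ∑' ℓ : ℕ, if a + 1 ≤ ℓ then p ℓ else 0 := rfl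
  -- basic positivity facts
  have hpa : 0 < p a := hpos a le_rfl hab.le
  have hpb : 0 < p b := hpos b hab.le le_rfl
  have hc_pos : 0 < c := by
    rw [hc_eq]
    have := Finset.single_le_sum (f := p) (fun i _ => hnn i) (Finset.mem_range.mpr hab)
    linarith
  have hc_le1 : c ≤ 1 := by
    rw [hc_eq, ← h1.tsum_eq]
    exact Summable.sum_le_tsum _ (fun i _ => hnn i) hps
  have hd_pos : 0 < d := by
    rw [hd_eq]
    have hle := Summable.le_tsum (summable_ite_tail hps (a+1)) b (fun j _ => by
      by_cases h : a + 1 ≤ j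
      · simpa [h] using hnn j
      · simp [h])
    rw [if_pos (by omega : a + 1 ≤ b)] at hle
    linarith
  have hd_le1 : d ≤ 1 := by
    rw [hd_eq, tsum_ite_tail hps (a+1), h1.tsum_eq]
    have : 0 ≤ ∑ n ∈ Finset.range (a+1), p n := Finset.sum_nonneg fun n _ => hnn n
    linarith
  set A := ∑ n ∈ Finset.range a, p n with hA_def
  set T := ∑' n : ℕ, (if b + 1 ≤ n then p n else 0) with hT_def
  set Q := ∑' n : ℕ, (if b + 2 ≤ n then p n else 0) with hQ_def
  have hA0 : 0 ≤ A := Finset.sum_nonneg fun n _ => hnn n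
  have hT0 : 0 ≤ T := tsum_nonneg (fun n => by
    by_cases h : b + 1 ≤ n
    · simpa [h] using hnn n
    · simp [h])
  have hQ0 : 0 ≤ Q := tsum_nonneg (fun n => by
    by_cases h : b + 2 ≤ n
    · simpa [h] using hnn n
    · simp [h])
  have hTQ : T = p (b+1) + Q := by
    rw [hT_def, hQ_def, tsum_ite_tail hps (b+1), tsum_ite_tail hps (b+2),
      Finset.sum_range_succ (n := b+1)]
    ring
  -- the three key inequalities on logs
  have hlog_c : Real.log c ≤ 0 := Real.log_nonpos hc_pos.le hc_le1
  have hlog_d : Real.log d ≤ 0 := Real.log_nonpos hd_pos.le hd_le1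
  have hbpos : (0:ℝ) < b := by exact_mod_cast hb1
  have hμb : (μ:ℝ) / b < 1 := by
    rw [div_lt_one hbpos]; exact_mod_cast hub
  have hμb0 : 0 ≤ (μ:ℝ) / b := by positivity
  -- Markov : tail from b is at most μ/b, hence c ≥ 1 - μ/b
  have hMarkov : 1 - (μ:ℝ)/b ≤ c := by
    have htail : ∑' n : ℕ, (if b ≤ n then p n else 0) ≤ (μ:ℝ)/b := by
      have hbd : ∀ n : ℕ, (if b ≤ n then p n else 0) ≤ (n:ℝ)/b * p n := by
        intro n
        by_cases h : b ≤ n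
        · rw [if_pos h]
          have : (1:ℝ) ≤ (n:ℝ)/b := by
            rw [le_div_iff₀ hbpos, one_mul]; exact_mod_cast h
          nlinarith [hnn n]
        · rw [if_neg h]
          exact mul_nonneg (by positivity) (hnn n)
      have hsum : Summable (fun n : ℕ => (n:ℝ)/b * p n) := by
        have : (fun n : ℕ => (n:ℝ)/b * p n) = fun n : ℕ => (1/(b:ℝ)) * ((n:ℝ) * p n) := by
          funext n; ring
        rw [this]; exact hnps.mul_left _
      have := Summable.tsum_le_tsum hbd (summable_ite_tail hps b) hsum
      calc ∑' n : ℕ, (if b ≤ n then p n else 0) ≤ ∑' n : ℕ, (n:ℝ)/b * p n := this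
        _ = (1/(b:ℝ)) * ∑' n : ℕ, (n:ℝ) * p n := by
            rw [← tsum_mul_left]; exact tsum_congr fun n => by ring
        _ = (μ:ℝ)/b := by rw [hμ.tsum_eq]; ring
    have hceq : c = 1 - ∑' n : ℕ, (if b ≤ n then p n else 0) := by
      rw [hc_eq, tsum_ite_tail hps b, h1.tsum_eq]; ring
    linarith [hceq, htail]
  have hk1' : Real.log d - Real.log c ≤ k₁ := by
    have h2 : Real.log (1 - (μ:ℝ)/b) ≤ Real.log c :=
      Real.log_le_log (by linarith) hMarkov
    linarith
  have hk1pos : 0 ≤ k₁ := by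
    have : Real.log (1 - (μ:ℝ)/b) ≤ 0 := Real.log_nonpos (by linarith) (by linarith)
    linarith
  have hk2' : Real.log c - Real.log d ≤ k₂ := by
    have hdc0 : 1 ≤ d * ∑' n : ℕ, (2:ℝ)^n * p n :=
      one_le_lamg_mul_C0 a μ p hnn h1 hμ hau hC0 d hd_eq hd_pos
    have hC0ge1 : 1 ≤ ∑' n : ℕ, (2:ℝ)^n * p n := by nlinarith [hd_pos, hd_le1]
    have hC0pos : 0 < ∑' n : ℕ, (2:ℝ)^n * p n := by linarith
    have hlogsum : 0 ≤ Real.log (d * ∑' n : ℕ, (2:ℝ)^n * p n) := Real.log_nonneg hdc0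
    rw [Real.log_mul hd_pos.ne' hC0pos.ne'] at hlogsum
    linarith
  -- Sum 3 : the range-a sum
  have hS3 : ∑ n ∈ Finset.range a, ((a : ℝ) - n) * Lop a b p n = -(d * A) := by
    have hpt : ∀ n ∈ Finset.range a,
        ((a : ℝ) - n) * Lop a b p n
          = d * (((a : ℝ) - n) * ((if 1 ≤ n then p (n-1) else 0) - p n)) := by
      intro n hn
      have hn' := Finset.mem_range.mp hn
      unfold Lop
      rw [if_neg (by omega : ¬ a ≤ n), if_neg (by omega : ¬ a + 1 ≤ n),
        if_pos (by omega : n ≤ b - 1)]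
      by_cases h1n : 1 ≤ n
      · rw [if_pos (show 1 ≤ n ∧ n ≤ b by omega), if_pos h1n, ← hc_def, ← hd_def]; ring
      · rw [if_neg (show ¬ (1 ≤ n ∧ n ≤ b) from fun hh => h1n hh.1), if_neg h1n,
          ← hc_def, ← hd_def]; ring
    rw [Finset.sum_congr rfl hpt, ← Finset.mul_sum, sumA_aux, hA_def]
    ring
  -- Sum 2 : the tail sum
  have hS2 : ∑' n : ℕ, (if b + 1 ≤ n then (n : ℝ) * Lop a b p n else 0)
      = c * (-(((b:ℝ)+1) * p (b+1)) - Q) := by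
    have hpt : ∀ n : ℕ, (if b + 1 ≤ n then (n : ℝ) * Lop a b p n else 0)
        = c * (if b + 1 ≤ n then (n:ℝ) * (p (n+1) - p n) else 0) := by
      intro n
      by_cases h : b + 1 ≤ n
      · rw [if_pos h, if_pos h]
        unfold Lop
        rw [if_pos (by omega : a ≤ n), if_pos (by omega : a + 1 ≤ n),
          if_neg (by omega : ¬ (1 ≤ n ∧ n ≤ b)), if_neg (by omega : ¬ n ≤ b - 1),
          ← hc_def, ← hd_def]
        ring
      · rw [if_neg h, if_neg h, mul_zero]
    rw [tsum_congr hpt, tsum_mul_left, tail_Lop_sum b p hnn hps hnps, ← hQ_def]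
  -- Sum 1 : the middle sum
  have hS1 : ∑ n ∈ Finset.Icc a b, Lop a b p n * Real.log (p n)
      = ∑ n ∈ Finset.Ico a b, (c * p (n+1) - d * p n) * (Real.log (p n) - Real.log (p (n+1)))
        + c * p (b+1) * Real.log (p b)
        + (if 1 ≤ a then d * p (a-1) * Real.log (p a) else 0) := by
    have := middle_identity a b hab c d p (fun n => Real.log (p n))
    simpa only [Lop, ← hc_def, ← hd_def] using this
  -- bound the edge terms
  set K := Real.log c - Real.log d with hK_def
  have hedge : ∀ n ∈ Finset.Ico a b,
      (c * p (n+1) - d * p n) * (Real.log (p n) - Real.log (p (n+1)))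
        ≤ (c * p (n+1) - d * p n) * K := by
    intro n hn
    obtain ⟨hna, hnb⟩ := Finset.mem_Ico.mp hn
    have hpn : 0 < p n := hpos n hna (by omega)
    have hpn1 : 0 < p (n+1) := hpos (n+1) (by omega) (by omega)
    have hx : 0 < c * p (n+1) := mul_pos hc_pos hpn1
    have hy : 0 < d * p n := mul_pos hd_pos hpn
    have hlogx : Real.log (c * p (n+1)) = Real.log c + Real.log (p (n+1)) :=
      Real.log_mul hc_pos.ne' hpn1.ne'
    have hlogy : Real.log (d * p n) = Real.log d + Real.log (p n) :=
      Real.log_mul hd_pos.ne' hpn.ne'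
    have key : (c * p (n+1) - d * p n) * (Real.log (d * p n) - Real.log (c * p (n+1))) ≤ 0 := by
      rcases le_total (c * p (n+1)) (d * p n) with h | h
      · exact mul_nonpos_of_nonpos_of_nonneg (by linarith)
          (by linarith [Real.log_le_log hx h])
      · exact mul_nonpos_of_nonneg_of_nonpos (by linarith)
          (by linarith [Real.log_le_log hy h])
    have e : Real.log (p n) - Real.log (p (n+1))
        = (Real.log (d * p n) - Real.log (c * p (n+1))) + K := by
      rw [hlogx, hlogy, hK_def]; ring
    calc (c * p (n+1) - d * p n) * (Real.log (p n) - Real.log (p (n+1)))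
        = (c * p (n+1) - d * p n) * (Real.log (d * p n) - Real.log (c * p (n+1)))
          + (c * p (n+1) - d * p n) * K := by rw [e]; ring
      _ ≤ (c * p (n+1) - d * p n) * K := by linarith
  have hedge_sum : ∑ n ∈ Finset.Ico a b,
      (c * p (n+1) - d * p n) * (Real.log (p n) - Real.log (p (n+1)))
        ≤ (∑ n ∈ Finset.Ico a b, (c * p (n+1) - d * p n)) * K := by
    rw [Finset.sum_mul]
    exact Finset.sum_le_sum hedge
  -- compute the edge mass
  have hJ : ∑ n ∈ Finset.Ico a b, (c * p (n+1) - d * p n) = d * A - c * T := by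
    have h1' : ∑ n ∈ Finset.Ico a b, p (n+1) = ∑ n ∈ Finset.Ico (a+1) (b+1), p n :=
      (shift_sum_aux a b p).symm
    have h2' : ∑ n ∈ Finset.Ico (a+1) (b+1), p n
        = ∑ n ∈ Finset.range (b+1), p n - ∑ n ∈ Finset.range (a+1), p n := by
      exact Finset.sum_Ico_eq_sub _ (by omega : a + 1 ≤ b + 1)
    have h3' : ∑ n ∈ Finset.Ico a b, p n
        = ∑ n ∈ Finset.range b, p n - ∑ n ∈ Finset.range a, p n := by
      exact Finset.sum_Ico_eq_sub _ hab.le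
    have hT_eq : ∑ n ∈ Finset.range (b+1), p n = 1 - T := by
      rw [hT_def, tsum_ite_tail hps (b+1), h1.tsum_eq]; ring
    have hd_eq2 : ∑ n ∈ Finset.range (a+1), p n = 1 - d := by
      rw [hd_eq, tsum_ite_tail hps (a+1), h1.tsum_eq]; ring
    rw [Finset.sum_sub_distrib, ← Finset.mul_sum, ← Finset.mul_sum, h1', h2', h3',
      hT_eq, hd_eq2, ← hc_eq, ← hA_def]
    ring
  -- remaining sign facts
  have hpb1 : 0 ≤ p (b+1) := hnn (b+1)
  have hpble : p b ≤ 1 := by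
    have := le_hasSum h1 b (fun j _ => hnn j); linarith
  have hpale : p a ≤ 1 := by
    have := le_hasSum h1 a (fun j _ => hnn j); linarith
  have hlogpb : Real.log (p b) ≤ 0 := Real.log_nonpos hpb.le hpble
  have hifneg : (if 1 ≤ a then d * p (a-1) * Real.log (p a) else 0) ≤ 0 := by
    by_cases ha : 1 ≤ a
    · rw [if_pos ha]
      have hloga : Real.log (p a) ≤ 0 := Real.log_nonpos hpa.le hpale
      have : 0 ≤ d * p (a-1) := mul_nonneg hd_pos.le (hnn (a-1))
      exact mul_nonpos_of_nonneg_of_nonpos this hloga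
    · rw [if_neg ha]
  -- assemble
  have t4 : c * p (b+1) * Real.log (p b) ≤ 0 :=
    mul_nonpos_of_nonneg_of_nonpos (mul_nonneg hc_pos.le hpb1) hlogpb
  have hS1le : ∑ n ∈ Finset.Icc a b, Lop a b p n * Real.log (p n)
      ≤ (d * A - c * T) * K + c * p (b+1) * Real.log (p b)
        + (if 1 ≤ a then d * p (a-1) * Real.log (p a) else 0) := by
    rw [hS1]
    have h := hedge_sum
    rw [hJ] at h
    exact add_le_add_left (add_le_add_left h _) _
  exact final_assembly _ _ _ K k₁ k₂ c d A T Q (p (b+1)) (Real.log (p b))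
    (if 1 ≤ a then d * p (a-1) * Real.log (p a) else 0) (b:ℝ)
    hS1le hS2 hS3 hTQ (by rw [hK_def]; linarith) (by rw [hK_def]; linarith) hk1pos hc_pos.le hd_pos.le hA0 hT0
    hpb1 (Nat.cast_nonneg b) t4 hifneg
end

section
/- Let a, μ be natural numbers with 0 ≤ a < μ, and let p be the geometric-type sequence defined by p_n = 0 for n ≤ a−1 and p_n = (1/(μ−a+1)) · ((μ−a)/(μ−a+1))^{n−a} for n ≥ a. Then the double series defining the Gini index converges and G[p] = 1 − (μ² − a² + a) / ( μ·(1 + 2(μ−a)) ). -/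
set_option maxHeartbeats 1000000


open scoped BigOperators

/-- The geometric-type equilibrium distribution supported on `{a, a+1, …}`. -/
noncomputable def pgeo (a μ : ℕ) (n : ℕ) : ℝ :=
  if n < a then 0
  else (1 / ((μ : ℝ) - a + 1)) * (((μ : ℝ) - a) / ((μ : ℝ) - a + 1)) ^ (n - a)

/-- The Gini index `G[p] = (1/(2μ)) ∑_{i,j≥0} |i−j| p_i p_j` of a sequence `p`
with mean `μ`. -/
noncomputable def gini (μ : ℕ) (p : ℕ → ℝ) : ℝ :=
  (1 / (2 * (μ : ℝ))) * ∑' ij : ℕ × ℕ, |(ij.1 : ℝ) - (ij.2 : ℝ)| * p ij.1 * p ij.2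

section aux

variable {r : ℝ}

/-- the "one-sided" summand -/
noncomputable def fside (r : ℝ) (p : ℕ × ℕ) : ℝ := ((p.1 - p.2 : ℕ) : ℝ) * r ^ p.1 * r ^ p.2

lemma e_inj : Function.Injective (fun p : ℕ × ℕ => (p.1 + p.2, p.2)) := by
  intro p q h
  simp only [Prod.mk.injEq] at h
  obtain ⟨h1, h2⟩ := h
  exact Prod.ext (by omega) h2

lemma fside_comp (r : ℝ) (p : ℕ × ℕ) :
    fside r ((p.1 + p.2, p.2)) = ((p.1 : ℝ) * r ^ p.1) * ((r ^ 2) ^ p.2) := by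
  simp only [fside]
  have : p.1 + p.2 - p.2 = p.1 := by omega
  rw [this]
  ring

lemma fside_support (r : ℝ) :
    Function.support (fside r) ⊆ Set.range (fun p : ℕ × ℕ => (p.1 + p.2, p.2)) := by
  intro p hp
  simp only [Function.mem_support, fside] at hp
  have h : p.2 ≤ p.1 := by
    by_contra h
    have : p.1 - p.2 = 0 := by omega
    simp [this] at hp
  exact ⟨(p.1 - p.2, p.2), by simp [Prod.ext_iff]; omega⟩

lemma summable_fside (hr0 : 0 ≤ r) (hr1 : r < 1) : Summable (fside r) := by
  have hA : Summable (fun n : ℕ => (n : ℝ) * r ^ n) := by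
    have := summable_pow_mul_geometric_of_norm_lt_one (R := ℝ) 1
      (r := r) (by rw [Real.norm_eq_abs, abs_of_nonneg hr0]; exact hr1)
    simpa using this
  have hB : Summable (fun n : ℕ => (r ^ 2) ^ n) :=
    summable_geometric_of_lt_one (by positivity) (by nlinarith)
  have hprod : Summable (fun p : ℕ × ℕ => ((p.1 : ℝ) * r ^ p.1) * ((r ^ 2) ^ p.2)) :=
    hA.mul_of_nonneg hB (fun n => by positivity) (fun n => by positivity)
  rw [← Function.Injective.summable_iff e_inj (fun x hx => by
    by_contra h; exact hx (fside_support r h))]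
  exact hprod.congr (fun p => (fside_comp r p).symm)

lemma tsum_fside (hr0 : 0 ≤ r) (hr1 : r < 1) :
    ∑' p : ℕ × ℕ, fside r p = (r / (1 - r) ^ 2) * (1 / (1 - r ^ 2)) := by
  have hrn : ‖r‖ < 1 := by rw [Real.norm_eq_abs, abs_of_nonneg hr0]; exact hr1
  have hA : Summable (fun n : ℕ => ‖(n : ℝ) * r ^ n‖) := by
    have := summable_norm_pow_mul_geometric_of_norm_lt_one (R := ℝ) 1 hrn
    simpa using this
  have hB : Summable (fun n : ℕ => ‖(r ^ 2) ^ n‖) := by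
    apply Summable.of_nonneg_of_le (fun n => norm_nonneg _) (fun n => le_of_eq ?_)
      (summable_geometric_of_lt_one (r := r ^ 2) (by positivity) (by nlinarith))
    rw [Real.norm_eq_abs, abs_of_nonneg (by positivity)]
  rw [← Function.Injective.tsum_eq e_inj (fside_support r)]
  have := tsum_mul_tsum_of_summable_norm hA hB
  calc ∑' p : ℕ × ℕ, fside r (p.1 + p.2, p.2)
      = ∑' p : ℕ × ℕ, ((p.1 : ℝ) * r ^ p.1) * ((r ^ 2) ^ p.2) :=
        tsum_congr (fun p => fside_comp r p)
    _ = (∑' n : ℕ, (n : ℝ) * r ^ n) * (∑' n : ℕ, (r ^ 2) ^ n) := this.symm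
    _ = (r / (1 - r) ^ 2) * (1 / (1 - r ^ 2)) := by
        rw [tsum_coe_mul_geometric_of_norm_lt_one hrn,
          tsum_geometric_of_lt_one (by positivity) (by nlinarith), one_div]

end aux

theorem gini_of_geometric_type (a μ : ℕ) (hau : a < μ) :
    Summable (fun ij : ℕ × ℕ => |(ij.1 : ℝ) - (ij.2 : ℝ)| * pgeo a μ ij.1 * pgeo a μ ij.2) ∧
      gini μ (pgeo a μ) =
        1 - ((μ : ℝ) ^ 2 - (a : ℝ) ^ 2 + a) / ((μ : ℝ) * (1 + 2 * ((μ : ℝ) - a))) := by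
  set B : ℝ := (μ : ℝ) - a with hBdef
  have hB1 : (1 : ℝ) ≤ B := by
    have : (a : ℝ) + 1 ≤ μ := by exact_mod_cast Nat.succ_le_of_lt hau
    simp [hBdef]; linarith
  have hBp : (0 : ℝ) < B + 1 := by linarith
  set r : ℝ := B / (B + 1) with hrdef
  have hr0 : 0 ≤ r := by positivity
  have hr1 : r < 1 := by
    rw [hrdef, div_lt_one hBp]; linarith
  set c : ℝ := 1 / (B + 1) with hcdef
  -- pgeo values
  have hpgeo : ∀ m : ℕ, pgeo a μ (a + m) = c * r ^ m := by
    intro m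
    simp only [pgeo, hcdef, hrdef, hBdef]
    rw [if_neg (by omega), Nat.add_sub_cancel_left]
  have hpgeo0 : ∀ n : ℕ, n < a → pgeo a μ n = 0 := by
    intro n hn; simp [pgeo, hn]
  -- the full summand as a shift of gfull
  set F := fun ij : ℕ × ℕ => |(ij.1 : ℝ) - (ij.2 : ℝ)| * pgeo a μ ij.1 * pgeo a μ ij.2 with hF
  have he2 : Function.Injective (fun p : ℕ × ℕ => (a + p.1, a + p.2)) := by
    intro p q h
    simp only [Prod.mk.injEq] at h
    exact Prod.ext (by omega) (by omega)
  have hsupp : Function.support F ⊆ Set.range (fun p : ℕ × ℕ => (a + p.1, a + p.2)) := by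
    intro p hp
    simp only [Function.mem_support, hF] at hp
    have h1 : a ≤ p.1 := by
      by_contra h; push_neg at h; rw [hpgeo0 p.1 h] at hp; simp at hp
    have h2 : a ≤ p.2 := by
      by_contra h; push_neg at h; rw [hpgeo0 p.2 h] at hp; simp at hp
    exact ⟨(p.1 - a, p.2 - a), by simp [Prod.ext_iff]; omega⟩
  -- comp value: F(a+m, a+n) = c^2 * (fside r (m,n) + fside r (n,m))
  have hcomp : ∀ p : ℕ × ℕ, F (a + p.1, a + p.2)
      = c ^ 2 * (fside r p + fside r p.swap) := by
    intro ⟨m, n⟩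
    simp only [hF, hpgeo, fside, Prod.swap, Prod.fst, Prod.snd]
    have habs : |((a + m : ℕ) : ℝ) - ((a + n : ℕ) : ℝ)| = ((m - n : ℕ) : ℝ) + ((n - m : ℕ) : ℝ) := by
      push_cast
      rcases le_total m n with h | h
      · rw [abs_of_nonpos (by push_cast; linarith [(Nat.cast_le (α := ℝ)).2 h])]
        have h1 : m - n = 0 := by omega
        have h2 : ((n - m : ℕ) : ℝ) = (n : ℝ) - m := by
          have := Nat.cast_sub (R := ℝ) h; push_cast at this ⊢; linarith
        rw [h1, h2]; push_cast; ring
      · rw [abs_of_nonneg (by push_cast; linarith [(Nat.cast_le (α := ℝ)).2 h])]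
        have h1 : n - m = 0 := by omega
        have h2 : ((m - n : ℕ) : ℝ) = (m : ℝ) - n := by
          have := Nat.cast_sub (R := ℝ) h; push_cast at this ⊢; linarith
        rw [h1, h2]; push_cast; ring
    rw [habs]
    ring
  have hswap : Summable (fun p : ℕ × ℕ => fside r p.swap) :=
    ((Equiv.prodComm ℕ ℕ).summable_iff).2 (summable_fside hr0 hr1)
  have hsum_comp : Summable (fun p : ℕ × ℕ => F (a + p.1, a + p.2)) := by
    apply Summable.congr (f := fun p : ℕ × ℕ => c ^ 2 * (fside r p + fside r p.swap))
    · exact (((summable_fside hr0 hr1).add hswap).mul_left _)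
    · exact fun p => (hcomp p).symm
  have hsummable : Summable F :=
    (Function.Injective.summable_iff he2 (fun x hx => by
      by_contra h; exact hx (hsupp h))).1 hsum_comp
  refine ⟨hsummable, ?_⟩
  -- compute the tsum
  have htsum : ∑' p : ℕ × ℕ, F p
      = c ^ 2 * (2 * ((r / (1 - r) ^ 2) * (1 / (1 - r ^ 2)))) := by
    rw [← Function.Injective.tsum_eq he2 hsupp]
    calc ∑' p : ℕ × ℕ, F (a + p.1, a + p.2)
        = ∑' p : ℕ × ℕ, c ^ 2 * (fside r p + fside r p.swap) := tsum_congr hcomp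
      _ = c ^ 2 * ((∑' p : ℕ × ℕ, fside r p) + ∑' p : ℕ × ℕ, fside r p.swap) := by
          rw [tsum_mul_left, Summable.tsum_add (summable_fside hr0 hr1) hswap]
      _ = c ^ 2 * (2 * ((r / (1 - r) ^ 2) * (1 / (1 - r ^ 2)))) := by
          have hs : ∑' (p : ℕ × ℕ), fside r p.swap = ∑' (p : ℕ × ℕ), fside r p :=
            (Equiv.prodComm ℕ ℕ).tsum_eq (fside r)
          rw [hs, tsum_fside hr0 hr1]; ring
  have hμpos : (0 : ℝ) < μ := by exact_mod_cast lt_of_le_of_lt (Nat.zero_le a) hau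
  have h1mr : 1 - r = 1 / (B + 1) := by
    rw [hrdef]; field_simp; ring
  have h1mr2 : 1 - r ^ 2 = (2 * B + 1) / (B + 1) ^ 2 := by
    rw [hrdef]; field_simp; ring
  rw [gini, htsum, hcdef, hrdef, h1mr, h1mr2]
  have hμa : (μ : ℝ) = B + a := by rw [hBdef]; ring
  have h2B : (0:ℝ) < 2 * B + 1 := by linarith
  rw [hμa]
  field_simp
  ring
end

section
/- Let μ be a natural number with μ ≥ 1, and let a, a′ be natural numbers with a ≤ a′ < μ. For c ∈ {a, a′}, let p^{c} denote the geometric-type equilibrium sequence p^{c}_n = 0 for n ≤ c−1 and p^{c}_n = (1/(μ−c+1)) · ((μ−c)/(μ−c+1))^{n−c} for n ≥ c. Then the Gini indices satisfy the comparison G[p^{a′}] ≤ G[p^{a}]. -/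
open scoped BigOperators

section aux

variable {q : ℝ}

lemma summable_nq (h0 : 0 ≤ q) (h1 : q < 1) : Summable (fun n : ℕ => (n:ℝ) * q^n) := by
  have := summable_pow_mul_geometric_of_norm_lt_one 1 (r := q)
    (by rwa [Real.norm_eq_abs, abs_of_nonneg h0])
  simpa using this

lemma summable_k1q (h0 : 0 ≤ q) (h1 : q < 1) :
    Summable (fun k : ℕ => ((k:ℝ)+1) * q^(k+1)) := by
  have := (summable_nat_add_iff 1).2 (summable_nq h0 h1)
  refine this.congr fun k => ?_
  push_cast
  ring

lemma tsum_k1q (h0 : 0 ≤ q) (h1 : q < 1) :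
    ∑' k : ℕ, ((k:ℝ)+1) * q^(k+1) = q / (1-q)^2 := by
  have hb : Summable (fun n : ℕ => (n:ℝ) * q^n) := summable_nq h0 h1
  have h := Summable.tsum_eq_zero_add hb
  simp only [Nat.cast_zero, zero_mul, pow_zero, zero_add] at h
  have hv : ∑' n : ℕ, (n:ℝ) * q^n = q / (1-q)^2 :=
    tsum_coe_mul_geometric_of_norm_lt_one (by rwa [Real.norm_eq_abs, abs_of_nonneg h0])
  rw [← hv, h]
  apply tsum_congr
  intro k
  push_cast
  ring

set_option maxHeartbeats 1000000 in
/-- The key double sum. -/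
lemma key_tsum (h0 : 0 < q) (h1 : q < 1) :
    ∑' ij : ℕ × ℕ, |(ij.1 : ℝ) - (ij.2 : ℝ)| * q ^ ij.1 * q ^ ij.2
      = 2 * ((1 - q^2)⁻¹ * (q / (1-q)^2)) := by
  set G : ℕ × ℕ → ℝ := fun ik => (q^2)^ik.1 * (((ik.2:ℝ)+1) * q^(ik.2+1)) with hG
  set g : Bool × ℕ × ℕ → ℝ := fun x => G x.2 with hg
  have hq2 : 0 ≤ q^2 := sq_nonneg q
  have hq2' : q^2 < 1 := by nlinarith
  have hs1 : Summable (fun i : ℕ => (q^2)^i) := summable_geometric_of_lt_one hq2 hq2'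
  have hs2 : Summable (fun k : ℕ => ((k:ℝ)+1) * q^(k+1)) := summable_k1q h0.le h1
  have hGsum : Summable G :=
    Summable.mul_of_nonneg hs1 hs2
      (fun i => pow_nonneg hq2 i)
      (fun k => mul_nonneg (by positivity) (pow_nonneg h0.le _))
  have hgsum : Summable g := by
    have h1' : Summable (fun _ : Bool => (1:ℝ)) := .of_finite
    have := Summable.mul_of_nonneg h1' hGsum (fun _ => zero_le_one)
      (fun ik => mul_nonneg (pow_nonneg hq2 _)
        (mul_nonneg (by positivity) (pow_nonneg h0.le _)))
    exact this.congr fun x => by simp [hg]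
  have hbij :
      ∑' ij : ℕ × ℕ, |(ij.1 : ℝ) - (ij.2 : ℝ)| * q ^ ij.1 * q ^ ij.2
        = ∑' x : Bool × ℕ × ℕ, g x := by
    apply tsum_eq_tsum_of_ne_zero_bij
      (fun x => cond x.1.1 (x.1.2.1, x.1.2.1 + x.1.2.2 + 1) (x.1.2.1 + x.1.2.2 + 1, x.1.2.1))
    · rintro ⟨⟨b, i, k⟩, hx⟩ ⟨⟨b', i', k'⟩, hx'⟩ h
      have h' : (cond b (i, i + k + 1) (i + k + 1, i) : ℕ × ℕ)
          = cond b' (i', i' + k' + 1) (i' + k' + 1, i') := h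
      apply Subtype.ext
      cases b <;> cases b' <;>
        simp only [cond_true, cond_false, Prod.mk.injEq] at h' <;>
        simp only [Prod.mk.injEq] <;>
        first
          | exact ⟨trivial, by omega, by omega⟩
          | (exfalso; omega)
    · rintro ⟨i, j⟩ hij
      simp only [Function.mem_support] at hij
      have hijne : i ≠ j := by
        intro h
        exact hij (by simp [h])
      rcases lt_or_gt_of_ne hijne with hlt | hlt
      · refine ⟨⟨(true, i, j - i - 1), ?_⟩, ?_⟩
        · simp only [Function.mem_support, hg, hG]
          positivity
        · show (i, i + (j - i - 1) + 1) = (i, j)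
          rw [show i + (j - i - 1) + 1 = j by omega]
      · refine ⟨⟨(false, j, i - j - 1), ?_⟩, ?_⟩
        · simp only [Function.mem_support, hg, hG]
          positivity
        · show (j + (i - j - 1) + 1, j) = (i, j)
          rw [show j + (i - j - 1) + 1 = i by omega]
    · rintro ⟨⟨b, i, k⟩, hx⟩
      cases b
      · show |((i + k + 1 : ℕ) : ℝ) - (i : ℝ)| * q ^ (i + k + 1) * q ^ i = G (i, k)
        have habs : |((i + k + 1 : ℕ) : ℝ) - (i : ℝ)| = (k : ℝ) + 1 := by
          rw [show ((i + k + 1 : ℕ) : ℝ) - (i : ℝ) = (k : ℝ) + 1 by push_cast; ring]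
          exact abs_of_nonneg (by positivity)
        rw [habs, hG]
        ring
      · show |(i : ℝ) - ((i + k + 1 : ℕ) : ℝ)| * q ^ i * q ^ (i + k + 1) = G (i, k)
        have habs : |(i : ℝ) - ((i + k + 1 : ℕ) : ℝ)| = (k : ℝ) + 1 := by
          rw [abs_sub_comm,
            show ((i + k + 1 : ℕ) : ℝ) - (i : ℝ) = (k : ℝ) + 1 by push_cast; ring]
          exact abs_of_nonneg (by positivity)
        rw [habs, hG]
        ring
  rw [hbij]
  have hslice : ∀ b : Bool, Summable (fun y : ℕ × ℕ => g (b, y)) := fun b => hGsum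
  rw [Summable.tsum_prod' hgsum hslice]
  have hGval : ∑' y : ℕ × ℕ, G y = (1 - q^2)⁻¹ * (q / (1-q)^2) := by
    have hsliceG : ∀ i : ℕ, Summable (fun k : ℕ => G (i, k)) := by
      intro i
      simp only [hG]
      exact hs2.mul_left _
    rw [Summable.tsum_prod' hGsum hsliceG]
    have hinner : ∀ i : ℕ, ∑' k : ℕ, G (i, k) = (q^2)^i * (q / (1-q)^2) := by
      intro i
      simp only [hG]
      rw [tsum_mul_left, tsum_k1q h0.le h1]
    simp_rw [hinner]
    rw [tsum_mul_right, tsum_geometric_of_lt_one hq2 hq2']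
  rw [tsum_bool]
  simp only [hg]
  rw [hGval]
  ring

end aux

lemma pgeo_shift (a μ : ℕ) (n : ℕ) :
    pgeo a μ (n + a) = (1 / ((μ : ℝ) - a + 1)) * (((μ : ℝ) - a) / ((μ : ℝ) - a + 1)) ^ n := by
  simp [pgeo]

lemma pgeo_zero_of_lt (a μ : ℕ) {n : ℕ} (h : n < a) : pgeo a μ n = 0 := by
  simp [pgeo, h]

set_option maxHeartbeats 1000000 in
lemma gini_pgeo (μ a : ℕ) (ha : a < μ) :
    gini μ (pgeo a μ)
      = (((μ:ℝ) - a) * ((μ:ℝ) - a + 1)) / ((μ:ℝ) * (2 * ((μ:ℝ) - a) + 1)) := by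
  set m : ℝ := (μ:ℝ) - a with hm
  have hm1 : 1 ≤ m := by
    have : (a:ℝ) + 1 ≤ (μ:ℝ) := by exact_mod_cast ha
    simp only [hm]; linarith
  have hm0 : 0 < m := lt_of_lt_of_le one_pos hm1
  have hm1' : (0:ℝ) < m + 1 := by linarith
  set q : ℝ := m / (m + 1) with hq
  set r : ℝ := 1 / (m + 1) with hr
  have hq0 : 0 < q := div_pos hm0 hm1'
  have hq1 : q < 1 := by rw [hq, div_lt_one hm1']; linarith
  have hqpow : ∀ n : ℕ, q ^ n ≠ 0 := fun n => pow_ne_zero n (ne_of_gt hq0)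
  have hr0 : r ≠ 0 := by rw [hr]; positivity
  have hrq : ∀ n : ℕ, r * q ^ n ≠ 0 := fun n => mul_ne_zero hr0 (hqpow n)
  have hshift :
      ∑' ij : ℕ × ℕ, |(ij.1 : ℝ) - (ij.2 : ℝ)| * pgeo a μ ij.1 * pgeo a μ ij.2
        = ∑' ij : ℕ × ℕ, |(ij.1 : ℝ) - (ij.2 : ℝ)| * (r * q ^ ij.1) * (r * q ^ ij.2) := by
    apply tsum_eq_tsum_of_ne_zero_bij (fun x => (x.1.1 + a, x.1.2 + a))
    · rintro ⟨⟨i, k⟩, hx⟩ ⟨⟨i', k'⟩, hx'⟩ h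
      simp only [Prod.mk.injEq] at h
      apply Subtype.ext
      simp only [Prod.mk.injEq]
      omega
    · rintro ⟨i, j⟩ hij
      simp only [Function.mem_support] at hij
      have hi : a ≤ i := by
        by_contra h
        exact hij (by simp [pgeo_zero_of_lt a μ (lt_of_not_ge h)])
      have hj : a ≤ j := by
        by_contra h
        exact hij (by simp [pgeo_zero_of_lt a μ (lt_of_not_ge h)])
      have hijne : i ≠ j := by
        intro h
        exact hij (by simp [h])
      refine ⟨⟨(i - a, j - a), ?_⟩, ?_⟩
      · simp only [Function.mem_support]
        have hne : ((i - a : ℕ):ℝ) ≠ ((j - a : ℕ):ℝ) := by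
          exact_mod_cast (show i - a ≠ j - a by omega)
        exact mul_ne_zero (mul_ne_zero (abs_ne_zero.2 (sub_ne_zero.2 hne)) (hrq _)) (hrq _)
      · show (i - a + a, j - a + a) = (i, j)
        simp only [Prod.mk.injEq]
        exact ⟨by omega, by omega⟩
    · rintro ⟨⟨i, j⟩, hx⟩
      show |((i + a : ℕ) : ℝ) - ((j + a : ℕ) : ℝ)| * pgeo a μ (i + a) * pgeo a μ (j + a)
        = |(i : ℝ) - (j : ℝ)| * (r * q ^ i) * (r * q ^ j)
      rw [pgeo_shift, pgeo_shift]
      have habs : |((i + a : ℕ) : ℝ) - ((j + a : ℕ) : ℝ)| = |(i : ℝ) - (j : ℝ)| := by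
        congr 1
        push_cast
        ring
      rw [habs, ← hm]
  rw [gini, hshift]
  have hterm :
      ∑' ij : ℕ × ℕ, |(ij.1 : ℝ) - (ij.2 : ℝ)| * (r * q ^ ij.1) * (r * q ^ ij.2)
        = (r * r) * ∑' ij : ℕ × ℕ, |(ij.1 : ℝ) - (ij.2 : ℝ)| * q ^ ij.1 * q ^ ij.2 := by
    rw [← tsum_mul_left]
    exact tsum_congr fun ij => by ring
  rw [hterm, key_tsum hq0 hq1]
  have hμ0 : (0:ℝ) < μ := by
    have : 0 < μ := by omega
    exact_mod_cast this
  have e1 : 1 - q^2 = (2*m+1)/((m+1)^2) := by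
    rw [hq]; field_simp; ring
  have e2 : 1 - q = 1/(m+1) := by
    rw [hq]; field_simp; ring
  rw [e1, e2, hq, hr]
  have h2m : (2*m+1) ≠ 0 := by positivity
  have hμne : (μ:ℝ) ≠ 0 := ne_of_gt hμ0
  have hm1ne : m + 1 ≠ 0 := ne_of_gt hm1'
  field_simp

theorem gini_comparison (μ a a' : ℕ) (hμ : 1 ≤ μ) (haa' : a ≤ a') (ha' : a' < μ) :
    gini μ (pgeo a' μ) ≤ gini μ (pgeo a μ) := by
  have ha : a < μ := lt_of_le_of_lt haa' ha'
  rw [gini_pgeo μ a ha, gini_pgeo μ a' ha']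
  set m : ℝ := (μ:ℝ) - a with hm
  set m' : ℝ := (μ:ℝ) - a' with hm'
  have hμ0 : (0:ℝ) < μ := by exact_mod_cast hμ
  have hm1 : 1 ≤ m := by
    have : (a:ℝ) + 1 ≤ (μ:ℝ) := by exact_mod_cast ha
    simp only [hm]; linarith
  have hm'1 : 1 ≤ m' := by
    have : (a':ℝ) + 1 ≤ (μ:ℝ) := by exact_mod_cast ha'
    simp only [hm']; linarith
  have hmm : m' ≤ m := by
    have : (a:ℝ) ≤ (a':ℝ) := by exact_mod_cast haa'
    simp only [hm, hm']; linarith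
  rw [div_le_div_iff₀ (by nlinarith) (by nlinarith)]
  nlinarith [mul_nonneg (sub_nonneg.2 hmm) (by nlinarith : (0:ℝ) ≤ 2*m*m' + m + m' + 1)]
end

section
/- For every real C > 0 there exists a constant L > 0 (depending only on C) such that for every integer N ≥ 2 and every real sequence x = (x_k)_{k∈ℕ} satisfying ∑_{k≥0} (k+1)·|x_k| ≤ C and ∑_{k≥0} (k+1)·|x_k|² ≤ C/N, one has ∑_{k≥0} |x_k| ≤ L·√(log N)/√N. -/
theorem l1_bound_from_weighted_moments :
    ∀ C : ℝ, 0 < C → ∃ L : ℝ, 0 < L ∧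
      ∀ N : ℕ, 2 ≤ N → ∀ x : ℕ → ℝ,
        Summable (fun k : ℕ => ((k : ℝ) + 1) * |x k|) →
        (∑' k : ℕ, ((k : ℝ) + 1) * |x k|) ≤ C →
        Summable (fun k : ℕ => ((k : ℝ) + 1) * |x k| ^ 2) →
        (∑' k : ℕ, ((k : ℝ) + 1) * |x k| ^ 2) ≤ C / N →
        (∑' k : ℕ, |x k|) ≤ L * Real.sqrt (Real.log N) / Real.sqrt N := by
  intro C hC
  have hlog2 : 0 < Real.log 2 := Real.log_pos (by norm_num)
  set A : ℝ := Real.sqrt C * Real.sqrt (1 + 1 / Real.log 2) with hA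
  set B : ℝ := C / Real.sqrt (Real.log 2) with hB
  have hApos : 0 < A := by
    have h1 : 0 < Real.sqrt C := Real.sqrt_pos.2 hC
    have h2 : 0 < Real.sqrt (1 + 1 / Real.log 2) := Real.sqrt_pos.2 (by positivity)
    positivity
  have hBpos : 0 < B := by
    have : 0 < Real.sqrt (Real.log 2) := Real.sqrt_pos.2 hlog2
    positivity
  refine ⟨A + B, by positivity, ?_⟩
  intro N hN x hs1 hc1 hs2 hc2
  have hN0 : 0 < (N : ℝ) := by positivity
  have hN1 : (2 : ℝ) ≤ (N : ℝ) := by exact_mod_cast hN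
  have hlogN : Real.log 2 ≤ Real.log N := Real.log_le_log (by norm_num) hN1
  have hlogNpos : 0 < Real.log N := lt_of_lt_of_le hlog2 hlogN
  have hsqN : 0 < Real.sqrt N := Real.sqrt_pos.2 hN0
  have hsqN1 : 1 ≤ Real.sqrt N := by
    rw [show (1:ℝ) = Real.sqrt 1 by simp]
    exact Real.sqrt_le_sqrt (by linarith)
  -- summability of |x|
  have hsabs : Summable fun k : ℕ => |x k| := by
    refine Summable.of_nonneg_of_le (fun k => abs_nonneg _) (fun k => ?_) hs1
    nlinarith [abs_nonneg (x k), (Nat.cast_nonneg k : (0:ℝ) ≤ k)]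
  -- split
  have hsplit := (Summable.sum_add_tsum_nat_add (f := fun k => |x k|) N hsabs).symm
  -- front bound via Cauchy-Schwarz
  have hCS : (∑ i ∈ Finset.range N, |x i|) ^ 2 ≤
      (∑ i ∈ Finset.range N, ((i : ℝ) + 1)⁻¹) *
      (∑ i ∈ Finset.range N, ((i : ℝ) + 1) * |x i| ^ 2) := by
    have := Finset.sum_mul_sq_le_sq_mul_sq (Finset.range N)
      (fun i => (Real.sqrt ((i : ℝ) + 1))⁻¹) (fun i => Real.sqrt ((i : ℝ) + 1) * |x i|)
    have h1 : ∀ i : ℕ, (Real.sqrt ((i : ℝ) + 1))⁻¹ * (Real.sqrt ((i : ℝ) + 1) * |x i|) = |x i| := by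
      intro i
      have h : (0:ℝ) < Real.sqrt ((i : ℝ) + 1) := Real.sqrt_pos.2 (by positivity)
      field_simp
    have h2 : ∀ i : ℕ, ((Real.sqrt ((i : ℝ) + 1))⁻¹) ^ 2 = ((i : ℝ) + 1)⁻¹ := by
      intro i
      rw [← Real.sqrt_inv, Real.sq_sqrt (by positivity)]
    have h3 : ∀ i : ℕ, (Real.sqrt ((i : ℝ) + 1) * |x i|) ^ 2 = ((i : ℝ) + 1) * |x i| ^ 2 := by
      intro i
      rw [mul_pow, Real.sq_sqrt (by positivity)]
    simpa only [h1, h2, h3] using this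
  -- harmonic bound
  have hharm : (∑ i ∈ Finset.range N, ((i : ℝ) + 1)⁻¹) ≤ 1 + Real.log N := by
    have h := harmonic_le_one_add_log N
    have heq : ((harmonic N : ℚ) : ℝ) = ∑ i ∈ Finset.range N, ((i : ℝ) + 1)⁻¹ := by
      simp [harmonic, Rat.cast_sum]
    rw [← heq]
    exact_mod_cast h
  have hfin2 : (∑ i ∈ Finset.range N, ((i : ℝ) + 1) * |x i| ^ 2) ≤ C / N :=
    le_trans (Summable.sum_le_tsum _ (fun k _ => by positivity) hs2) hc2
  have hfront : (∑ i ∈ Finset.range N, |x i|) ≤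
      Real.sqrt ((1 + Real.log N) * (C / N)) := by
    rw [← Real.sqrt_sq (Finset.sum_nonneg fun i _ => abs_nonneg _)]
    apply Real.sqrt_le_sqrt
    calc (∑ i ∈ Finset.range N, |x i|) ^ 2 ≤ _ := hCS
      _ ≤ (1 + Real.log N) * (C / N) :=
        mul_le_mul hharm hfin2 (Finset.sum_nonneg fun i _ => by positivity) (by positivity)
  have hfront2 : (∑ i ∈ Finset.range N, |x i|) ≤ A * Real.sqrt (Real.log N) / Real.sqrt N := by
    refine hfront.trans ?_
    have hkey : A * Real.sqrt (Real.log N) / Real.sqrt N =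
        Real.sqrt ((1 + 1 / Real.log 2) * Real.log N * (C / N)) := by
      rw [show (1 + 1 / Real.log 2) * Real.log N * (C / N) =
          (A * Real.sqrt (Real.log N) / Real.sqrt N) ^ 2 by
        rw [div_pow, mul_pow, mul_pow, Real.sq_sqrt hC.le,
          Real.sq_sqrt (by positivity : (0:ℝ) ≤ 1 + 1 / Real.log 2),
          Real.sq_sqrt hlogNpos.le, Real.sq_sqrt hN0.le]
        ring]
      rw [Real.sqrt_sq (by positivity)]
    rw [hkey]
    apply Real.sqrt_le_sqrt
    have h1 : 1 + Real.log N ≤ (1 + 1 / Real.log 2) * Real.log N := by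
      have : 1 ≤ Real.log N / Real.log 2 := (one_le_div hlog2).2 hlogN
      have h2 : Real.log N / Real.log 2 = (1 / Real.log 2) * Real.log N := by ring
      nlinarith
    have hCN : (0:ℝ) ≤ C / N := by positivity
    nlinarith [hlogNpos]
  -- tail bound
  have hsh : Summable fun i : ℕ => (((i + N : ℕ) : ℝ) + 1) * |x (i + N)| :=
    (summable_nat_add_iff (f := fun k => ((k : ℝ) + 1) * |x k|) N).2 hs1
  have hshsum : (∑' i : ℕ, (((i + N : ℕ) : ℝ) + 1) * |x (i + N)|) ≤ C := by
    have heq := Summable.sum_add_tsum_nat_add (f := fun k => ((k : ℝ) + 1) * |x k|) N hs1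
    have hnn : 0 ≤ ∑ i ∈ Finset.range N, ((i : ℝ) + 1) * |x i| :=
      Finset.sum_nonneg fun i _ => by positivity
    linarith [heq, hc1]
  have htail : (∑' i : ℕ, |x (i + N)|) ≤ C / N := by
    have hstep : (∑' i : ℕ, |x (i + N)|) ≤
        ∑' i : ℕ, (N : ℝ)⁻¹ * ((((i + N : ℕ) : ℝ) + 1) * |x (i + N)|) := by
      have hsabs' : Summable fun i : ℕ => |x (i + N)| :=
        (summable_nat_add_iff (f := fun k => |x k|) N).2 hsabs
      have hsh' : Summable fun i : ℕ => (N : ℝ)⁻¹ * ((((i + N : ℕ) : ℝ) + 1) * |x (i + N)|) :=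
        hsh.mul_left _
      refine Summable.tsum_le_tsum (fun i => ?_) hsabs' hsh'
      have hle : (N : ℝ) ≤ ((i + N : ℕ) : ℝ) + 1 := by
        push_cast; linarith [Nat.cast_nonneg (α := ℝ) i]
      have h1 := mul_le_mul_of_nonneg_right hle (abs_nonneg (x (i + N)))
      have h2 : (0:ℝ) ≤ (N : ℝ)⁻¹ := by positivity
      calc |x (i + N)| = (N : ℝ)⁻¹ * ((N : ℝ) * |x (i + N)|) := by
            rw [← mul_assoc, inv_mul_cancel₀ hN0.ne', one_mul]
        _ ≤ _ := mul_le_mul_of_nonneg_left h1 h2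
    rw [tsum_mul_left] at hstep
    refine hstep.trans ?_
    rw [div_eq_inv_mul]
    exact mul_le_mul_of_nonneg_left hshsum (by positivity)
  have htail2 : (∑' i : ℕ, |x (i + N)|) ≤ B * Real.sqrt (Real.log N) / Real.sqrt N := by
    refine htail.trans ?_
    rw [hB]
    rw [div_le_div_iff₀ hN0 hsqN]
    have hsl : Real.sqrt (Real.log 2) ≤ Real.sqrt (Real.log N) := Real.sqrt_le_sqrt hlogN
    have hNsq : (N : ℝ) = Real.sqrt N * Real.sqrt N := (Real.mul_self_sqrt hN0.le).symm
    have hsl2 : 0 < Real.sqrt (Real.log 2) := Real.sqrt_pos.2 hlog2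
    rw [div_mul_eq_mul_div, div_mul_eq_mul_div, le_div_iff₀ hsl2]
    have k1 := mul_le_mul_of_nonneg_left hsl (mul_nonneg hC.le hsqN.le)
    have k2 := mul_le_mul_of_nonneg_right
      (mul_le_mul_of_nonneg_left hsqN1 (mul_nonneg hC.le hsqN.le))
      (Real.sqrt_nonneg (Real.log N))
    have k3 : C * Real.sqrt (Real.log N) * (Real.sqrt N * Real.sqrt N)
        = C * Real.sqrt (Real.log N) * (N : ℝ) := by
      rw [Real.mul_self_sqrt hN0.le]
    linarith only [k1, k2, k3]
  calc (∑' k : ℕ, |x k|) = (∑ i ∈ Finset.range N, |x i|) + ∑' i : ℕ, |x (i + N)| := hsplit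
    _ ≤ A * Real.sqrt (Real.log N) / Real.sqrt N + B * Real.sqrt (Real.log N) / Real.sqrt N :=
        add_le_add hfront2 htail2
    _ = (A + B) * Real.sqrt (Real.log N) / Real.sqrt N := by ring
end

section
/- Let a, b be natural numbers with a < b. Then for all probability mass functions p, q on ℕ (i.e., p_n, q_n ≥ 0 with ∑_{n≥0} p_n = ∑_{n≥0} q_n = 1), the operator L is Lipschitz in the ℓ¹ norm: ∑_{n≥0} |L[p]_n − L[q]_n| ≤ 8·∑_{n≥0} |p_n − q_n|. -/
open scoped BigOperators

lemma abs_ite_le (c : Prop) [Decidable c] (x : ℝ) : |if c then x else 0| ≤ |x| := by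
  split_ifs <;> simp [abs_nonneg]

lemma tsum_shift_le (e : ℕ → ℝ) (he : Summable e) (he0 : ∀ n, 0 ≤ e n) :
    ∑' n : ℕ, e (n + 1) ≤ ∑' n : ℕ, e n := by
  rw [Summable.tsum_eq_zero_add he]
  have := he0 0
  linarith

lemma summable_back (b : ℕ) (e : ℕ → ℝ) :
    Summable (fun n : ℕ => if 1 ≤ n ∧ n ≤ b then e (n - 1) else 0) := by
  apply summable_of_ne_finset_zero (s := Finset.range (b + 1))
  intro n hn
  rw [Finset.mem_range, not_lt] at hn
  have : ¬(1 ≤ n ∧ n ≤ b) := by omega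
  simp [this]

lemma tsum_back_le (b : ℕ) (e : ℕ → ℝ) (he : Summable e) (he0 : ∀ n, 0 ≤ e n) :
    ∑' n : ℕ, (if 1 ≤ n ∧ n ≤ b then e (n - 1) else 0) ≤ ∑' n : ℕ, e n := by
  set g : ℕ → ℝ := fun n => if 1 ≤ n then e (n - 1) else 0 with hgdef
  have hg1 : (fun n : ℕ => g (n + 1)) = e := by
    funext n; simp [hgdef]
  have hg : Summable g := by
    rw [← summable_nat_add_iff 1, hg1]; exact he
  have hge : ∑' n, g n = ∑' n, e n := by
    rw [Summable.tsum_eq_zero_add hg]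
    simp [hgdef, hg1]
  rw [← hge]
  refine Summable.tsum_le_tsum ?_ (summable_back b e) hg
  intro n
  by_cases h : 1 ≤ n ∧ n ≤ b
  · simp [h, hgdef, h.1]
  · simp only [h, if_false, hgdef]
    split_ifs with h1
    · exact he0 _
    · exact le_refl 0

lemma summable_ind (a : ℕ) (f : ℕ → ℝ) (hf : Summable f) :
    Summable (fun ℓ : ℕ => if a + 1 ≤ ℓ then f ℓ else 0) := by
  have : (fun ℓ : ℕ => if a + 1 ≤ ℓ then f ℓ else 0)
      = Set.indicator {ℓ : ℕ | a + 1 ≤ ℓ} f := by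
    funext ℓ; simp [Set.indicator_apply, Set.mem_setOf_eq]
  rw [this]
  exact hf.indicator _

set_option maxHeartbeats 1000000 in
theorem Lop_lipschitz (a b : ℕ) (hab : a < b) (p q : ℕ → ℝ)
    (hp0 : ∀ n, 0 ≤ p n) (hq0 : ∀ n, 0 ≤ q n)
    (hp : HasSum p 1) (hq : HasSum q 1) :
    (∑' n : ℕ, |Lop a b p n - Lop a b q n|) ≤ 8 * ∑' n : ℕ, |p n - q n| := by
  have hps := hp.summable
  have hqs := hq.summable
  set d : ℕ → ℝ := fun n => p n - q n with hdd
  have hd : Summable d := hps.sub hqs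
  have hda : Summable (fun n => |d n|) := hd.abs
  set D : ℝ := ∑' n, |d n| with hDdef
  have hD0 : 0 ≤ D := tsum_nonneg (fun n => abs_nonneg _)
  -- lamr bounds
  have hrp_le : lamr b p ≤ 1 := by
    rw [← hp.tsum_eq]; exact Summable.sum_le_tsum _ (fun i _ => hp0 i) hps
  have hrp0 : 0 ≤ lamr b p := Finset.sum_nonneg (fun i _ => hp0 i)
  have habs_rp : |lamr b p| ≤ 1 := abs_le.2 ⟨by linarith, hrp_le⟩
  have hrd : |lamr b p - lamr b q| ≤ D := by
    have h1 : lamr b p - lamr b q = ∑ ℓ ∈ Finset.range b, d ℓ := by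
      rw [lamr, lamr, ← Finset.sum_sub_distrib]
    rw [h1]
    calc |∑ ℓ ∈ Finset.range b, d ℓ| ≤ ∑ ℓ ∈ Finset.range b, |d ℓ| :=
          Finset.abs_sum_le_sum_abs _ _
      _ ≤ D := Summable.sum_le_tsum _ (fun i _ => abs_nonneg _) hda
  -- lamg bounds
  have hsgp := summable_ind a p hps
  have hsgq := summable_ind a q hqs
  have hgp_le : lamg a p ≤ 1 := by
    rw [lamg, ← hp.tsum_eq]
    refine Summable.tsum_le_tsum ?_ hsgp hps
    intro n; split_ifs <;> [exact le_refl _; exact hp0 n]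
  have hgp0 : 0 ≤ lamg a p := tsum_nonneg (fun n => by split_ifs; exacts [hp0 n, le_refl 0])
  have habs_gp : |lamg a p| ≤ 1 := abs_le.2 ⟨by linarith, hgp_le⟩
  have hgd : |lamg a p - lamg a q| ≤ D := by
    have h1 : lamg a p - lamg a q = ∑' ℓ, ((if a + 1 ≤ ℓ then p ℓ else 0) - (if a + 1 ≤ ℓ then q ℓ else 0)) := by
      rw [lamg, lamg, ← Summable.tsum_sub hsgp hsgq]
    have h2 : (fun ℓ : ℕ => (if a + 1 ≤ ℓ then p ℓ else 0) - (if a + 1 ≤ ℓ then q ℓ else 0))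
        = fun ℓ : ℕ => if a + 1 ≤ ℓ then d ℓ else 0 := by
      funext ℓ; split_ifs <;> simp [hdd]
    rw [h1, h2]
    have hsd := summable_ind a d hd
    calc |∑' ℓ, if a + 1 ≤ ℓ then d ℓ else 0| ≤ ∑' ℓ, |if a + 1 ≤ ℓ then d ℓ else 0| := by
          simpa [Real.norm_eq_abs] using norm_tsum_le_tsum_norm (f := fun ℓ : ℕ => if a + 1 ≤ ℓ then d ℓ else 0) (by simpa [Real.norm_eq_abs] using hsd.abs)
      _ ≤ D := Summable.tsum_le_tsum (fun n => abs_ite_le _ _) hsd.abs hda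
  -- majorant pieces
  set A : ℕ → ℝ := fun n => |d (n + 1)| + |d n| with hAdef
  set B : ℕ → ℝ := fun n => D * (q (n + 1) + q n) with hBdef
  set C : ℕ → ℝ := fun n => (if 1 ≤ n ∧ n ≤ b then |d (n - 1)| else 0) + |d n| with hCdef
  set E : ℕ → ℝ := fun n => D * ((if 1 ≤ n ∧ n ≤ b then q (n - 1) else 0) + q n) with hEdef
  have s1 : Summable (fun n : ℕ => |d (n + 1)|) := by
    rw [← summable_nat_add_iff 1] at hda; exact hda
  have s3 : Summable (fun n : ℕ => q (n + 1)) := by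
    rw [← summable_nat_add_iff 1] at hqs; exact hqs
  have s5 : Summable (fun n : ℕ => if 1 ≤ n ∧ n ≤ b then |d (n - 1)| else 0) :=
    summable_back b (fun m => |d m|)
  have s6 : Summable (fun n : ℕ => if 1 ≤ n ∧ n ≤ b then q (n - 1) else 0) :=
    summable_back b q
  have hA : Summable A := s1.add hda
  have hB : Summable B := ((s3.add hqs).mul_left D)
  have hC : Summable C := s5.add hda
  have hE : Summable E := ((s6.add hqs).mul_left D)
  have hM : Summable (fun n => A n + B n + C n + E n) := ((hA.add hB).add hC).add hE
  -- pointwise bound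
  have hpt : ∀ n, |Lop a b p n - Lop a b q n| ≤ A n + B n + C n + E n := by
    intro n
    have decomp : Lop a b p n - Lop a b q n =
        lamr b p * ((if a ≤ n then d (n + 1) else 0) - (if a + 1 ≤ n then d n else 0))
        + (lamr b p - lamr b q) * ((if a ≤ n then q (n + 1) else 0) - (if a + 1 ≤ n then q n else 0))
        + lamg a p * ((if 1 ≤ n ∧ n ≤ b then d (n - 1) else 0) - (if n ≤ b - 1 then d n else 0))
        + (lamg a p - lamg a q) * ((if 1 ≤ n ∧ n ≤ b then q (n - 1) else 0) - (if n ≤ b - 1 then q n else 0)) := by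
      simp only [Lop, hdd]
      split_ifs <;> ring
    rw [decomp]
    set T1 := lamr b p * ((if a ≤ n then d (n + 1) else 0) - (if a + 1 ≤ n then d n else 0))
    set T2 := (lamr b p - lamr b q) * ((if a ≤ n then q (n + 1) else 0) - (if a + 1 ≤ n then q n else 0))
    set T3 := lamg a p * ((if 1 ≤ n ∧ n ≤ b then d (n - 1) else 0) - (if n ≤ b - 1 then d n else 0))
    set T4 := (lamg a p - lamg a q) * ((if 1 ≤ n ∧ n ≤ b then q (n - 1) else 0) - (if n ≤ b - 1 then q n else 0))
    have tri : |T1 + T2 + T3 + T4| ≤ |T1| + |T2| + |T3| + |T4| := by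
      have h1 := abs_add_le (T1 + T2 + T3) T4
      have h2 := abs_add_le (T1 + T2) T3
      have h3 := abs_add_le T1 T2
      linarith
    have bnd : ∀ x y : ℝ, |x - y| ≤ |x| + |y| := fun x y => abs_sub x y
    have h1 : |T1| ≤ A n := by
      rw [hAdef]
      calc |T1| = |lamr b p| * |(if a ≤ n then d (n + 1) else 0) - (if a + 1 ≤ n then d n else 0)| := abs_mul _ _
        _ ≤ 1 * (|d (n + 1)| + |d n|) := by
            apply mul_le_mul habs_rp _ (abs_nonneg _) zero_le_one
            exact (bnd _ _).trans (add_le_add (abs_ite_le _ _) (abs_ite_le _ _))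
        _ = |d (n + 1)| + |d n| := one_mul _
    have h2 : |T2| ≤ B n := by
      rw [hBdef]
      calc |T2| = |lamr b p - lamr b q| * |(if a ≤ n then q (n + 1) else 0) - (if a + 1 ≤ n then q n else 0)| := abs_mul _ _
        _ ≤ D * (q (n + 1) + q n) := by
            apply mul_le_mul hrd _ (abs_nonneg _) hD0
            refine (bnd _ _).trans (add_le_add ((abs_ite_le _ _).trans ?_) ((abs_ite_le _ _).trans ?_))
            · rw [abs_of_nonneg (hq0 _)]
            · rw [abs_of_nonneg (hq0 _)]
    have h3 : |T3| ≤ C n := by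
      rw [hCdef]
      calc |T3| = |lamg a p| * |(if 1 ≤ n ∧ n ≤ b then d (n - 1) else 0) - (if n ≤ b - 1 then d n else 0)| := abs_mul _ _
        _ ≤ 1 * ((if 1 ≤ n ∧ n ≤ b then |d (n - 1)| else 0) + |d n|) := by
            apply mul_le_mul habs_gp _ (abs_nonneg _) zero_le_one
            refine (bnd _ _).trans (add_le_add ?_ (abs_ite_le _ _))
            split_ifs <;> simp
        _ = (if 1 ≤ n ∧ n ≤ b then |d (n - 1)| else 0) + |d n| := one_mul _
    have h4 : |T4| ≤ E n := by
      rw [hEdef]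
      calc |T4| = |lamg a p - lamg a q| * |(if 1 ≤ n ∧ n ≤ b then q (n - 1) else 0) - (if n ≤ b - 1 then q n else 0)| := abs_mul _ _
        _ ≤ D * ((if 1 ≤ n ∧ n ≤ b then q (n - 1) else 0) + q n) := by
            apply mul_le_mul hgd _ (abs_nonneg _) hD0
            refine (bnd _ _).trans (add_le_add ?_ ((abs_ite_le _ _).trans (by rw [abs_of_nonneg (hq0 _)])))
            split_ifs with h
            · rw [abs_of_nonneg (hq0 _)]
            · simp
    linarith
  -- summability of LHS
  have hLsum : Summable (fun n => |Lop a b p n - Lop a b q n|) :=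
    Summable.of_nonneg_of_le (fun n => abs_nonneg _) hpt hM
  -- tsum bounds for pieces
  have b1 : ∑' n : ℕ, |d (n + 1)| ≤ D := tsum_shift_le _ hda (fun n => abs_nonneg _)
  have b3 : ∑' n : ℕ, q (n + 1) ≤ 1 := by
    have := tsum_shift_le q hqs hq0
    rwa [hq.tsum_eq] at this
  have b4 : ∑' n : ℕ, q n = 1 := hq.tsum_eq
  have b5 : ∑' n : ℕ, (if 1 ≤ n ∧ n ≤ b then |d (n - 1)| else 0) ≤ D :=
    tsum_back_le b (fun m => |d m|) hda (fun n => abs_nonneg _)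
  have b6 : ∑' n : ℕ, (if 1 ≤ n ∧ n ≤ b then q (n - 1) else 0) ≤ 1 := by
    have := tsum_back_le b q hqs hq0
    rwa [b4] at this
  have hAt : ∑' n, A n ≤ 2 * D := by
    rw [hAdef]
    rw [Summable.tsum_add s1 hda]
    linarith
  have hBt : ∑' n, B n ≤ 2 * D := by
    rw [hBdef]
    rw [tsum_mul_left, Summable.tsum_add s3 hqs]
    nlinarith
  have hCt : ∑' n, C n ≤ 2 * D := by
    rw [hCdef, Summable.tsum_add s5 hda]
    linarith
  have hEt : ∑' n, E n ≤ 2 * D := by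
    rw [hEdef, tsum_mul_left, Summable.tsum_add s6 hqs]
    nlinarith
  calc ∑' n, |Lop a b p n - Lop a b q n| ≤ ∑' n, (A n + B n + C n + E n) :=
        Summable.tsum_le_tsum hpt hLsum hM
    _ = (∑' n, A n) + (∑' n, B n) + (∑' n, C n) + (∑' n, E n) := by
        rw [Summable.tsum_add ((hA.add hB).add hC) hE, Summable.tsum_add (hA.add hB) hC, Summable.tsum_add hA hB]
    _ ≤ 8 * D := by linarith
end
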